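/- arXiv:1706.06766 — 4 statements merged into one kernel-verified Lean document; each statement's English description precedes it below -/
import Mathlib

section
/- Let λ ∈ ℝ and let g : [−1,1] → ℝ be twice continuously differentiable and satisfy ((1−t²) g'(t))' = λ(1−e^{g(t)}) for all t ∈ [−1,1]. Then λ(6−λ) ∫_{−1}^{1} (3t²−1) e^{g(t)} dt = 3 ∫_{−1}^{1} (1−t²)² g'(t)² dt. -/
open Real MeasureTheory

noncomputable section

/-- Euclidean Laplacian on ℝ² via the second iterated derivative. -/
def lap (w : ℝ × ℝ → ℝ) (y : ℝ × ℝ) : ℝ :=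
  iteratedFDeriv ℝ 2 w y ![(1, 0), (1, 0)] + iteratedFDeriv ℝ 2 w y ![(0, 1), (0, 1)]

/-- The unit sphere S² ⊂ ℝ³ (vectors encoded as functions `Fin 3 → ℝ`). -/
def sphere3 : Set (Fin 3 → ℝ) := {x | x 0 ^ 2 + x 1 ^ 2 + x 2 ^ 2 = 1}

/-- Inverse stereographic projection from the north pole. -/
def stereoN (y : ℝ × ℝ) : Fin 3 → ℝ :=
  ![2 * y.1 / (1 + y.1 ^ 2 + y.2 ^ 2), 2 * y.2 / (1 + y.1 ^ 2 + y.2 ^ 2),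
    (y.1 ^ 2 + y.2 ^ 2 - 1) / (1 + y.1 ^ 2 + y.2 ^ 2)]

/-- South-pole parametrization of the sphere. -/
def stereoS (y : ℝ × ℝ) : Fin 3 → ℝ :=
  ![2 * y.1 / (1 + y.1 ^ 2 + y.2 ^ 2), 2 * y.2 / (1 + y.1 ^ 2 + y.2 ^ 2),
    (1 - y.1 ^ 2 - y.2 ^ 2) / (1 + y.1 ^ 2 + y.2 ^ 2)]

/-- `u` is a solution of the mean field equation `Δu = lam (1 - e^u)` on `S²`,
expressed in the two stereographic charts. -/
def IsMFSolution (lam : ℝ) (u : (Fin 3 → ℝ) → ℝ) : Prop :=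
  ContinuousOn u sphere3 ∧
  ContDiff ℝ 2 (fun y => u (stereoN y)) ∧
  ContDiff ℝ 2 (fun y => u (stereoS y)) ∧
  (∀ y : ℝ × ℝ, lap (fun z => u (stereoN z)) y =
    4 * lam * (1 - Real.exp (u (stereoN y))) / (1 + y.1 ^ 2 + y.2 ^ 2) ^ 2) ∧
  (∀ y : ℝ × ℝ, lap (fun z => u (stereoS z)) y =
    4 * lam * (1 - Real.exp (u (stereoS y))) / (1 + y.1 ^ 2 + y.2 ^ 2) ^ 2)

/-- `u` is axially symmetric on `S²`: constant on the level sets of `⟨·, e⟩`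
for some unit vector `e`. -/
def AxiallySymmetric (u : (Fin 3 → ℝ) → ℝ) : Prop :=
  ∃ e : Fin 3 → ℝ, e 0 ^ 2 + e 1 ^ 2 + e 2 ^ 2 = 1 ∧
    ∀ x ∈ sphere3, ∀ x' ∈ sphere3,
      x 0 * e 0 + x 1 * e 1 + x 2 * e 2 = x' 0 * e 0 + x' 1 * e 1 + x' 2 * e 2 →
      u x = u x'

/-- Surface integral over `S²`, written in the north-pole stereographic chart. -/
def sphereIntegral (f : (Fin 3 → ℝ) → ℝ) : ℝ :=
  ∫ y : ℝ × ℝ, f (stereoN y) * (4 / (1 + y.1 ^ 2 + y.2 ^ 2) ^ 2)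

/-- The Kazdan–Warner-type identity with the second spherical harmonic
`F = 3t² - 1`, reduced to axially symmetric functions: if `((1 - t²) g')' = λ(1 - e^g)`
on `[-1, 1]`, then `λ(6 - λ) ∫_{-1}^{1} (3t² - 1) e^g dt = 3 ∫_{-1}^{1} (1 - t²)² g'² dt`. -/
theorem kazdan_warner_second_harmonic_axisym (lam : ℝ) (g : ℝ → ℝ)
    (hg : ContDiffOn ℝ 2 g (Set.Icc (-1 : ℝ) 1))
    (hode : ∀ t ∈ Set.Icc (-1 : ℝ) 1,
      derivWithin (fun s => (1 - s ^ 2) * derivWithin g (Set.Icc (-1 : ℝ) 1) s)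
          (Set.Icc (-1 : ℝ) 1) t = lam * (1 - Real.exp (g t))) :
    lam * (6 - lam) * ∫ t in (-1 : ℝ)..1, (3 * t ^ 2 - 1) * Real.exp (g t) =
      3 * ∫ t in (-1 : ℝ)..1, (1 - t ^ 2) ^ 2 * (derivWithin g (Set.Icc (-1 : ℝ) 1) t) ^ 2 := by
  have hle : (-1:ℝ) ≤ 1 := by norm_num
  have hUD : UniqueDiffOn ℝ (Set.Icc (-1:ℝ) 1) := uniqueDiffOn_Icc (by norm_num)
  set φ : ℝ → ℝ := derivWithin g (Set.Icc (-1:ℝ) 1) with hphidef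
  set h : ℝ → ℝ := fun t => (1 - t ^ 2) * φ t with hhdef
  have hφ1 : ContDiffOn ℝ 1 φ (Set.Icc (-1:ℝ) 1) := hg.derivWithin hUD (by norm_num)
  have hφc : ContinuousOn φ (Set.Icc (-1:ℝ) 1) := hφ1.continuousOn
  have hgc : ContinuousOn g (Set.Icc (-1:ℝ) 1) := hg.continuousOn
  have hec : ContinuousOn (fun t => Real.exp (g t)) (Set.Icc (-1:ℝ) 1) :=
    Real.continuous_exp.comp_continuousOn hgc
  have hhc : ContinuousOn h (Set.Icc (-1:ℝ) 1) :=
    (continuousOn_const.sub (continuousOn_id.pow 2)).mul hφc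
  have CI : ∀ f : ℝ → ℝ, ContinuousOn f (Set.Icc (-1:ℝ) 1) →
      IntervalIntegrable f MeasureTheory.volume (-1) 1 := by
    intro f hf
    apply ContinuousOn.intervalIntegrable
    rwa [Set.uIcc_of_le hle]
  have hIoo : ∀ t ∈ Set.Ioo (-1:ℝ) 1, Set.Icc (-1:ℝ) 1 ∈ nhds t :=
    fun t ht => Icc_mem_nhds ht.1 ht.2
  have hgd : ∀ t ∈ Set.Ioo (-1:ℝ) 1, HasDerivAt g (φ t) t := fun t ht =>
    ((hg.differentiableOn (by norm_num) t (Set.mem_Icc_of_Ioo ht)).hasDerivWithinAt).hasDerivAt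
      (hIoo t ht)
  have hhd : ∀ t ∈ Set.Ioo (-1:ℝ) 1, HasDerivAt h (lam * (1 - Real.exp (g t))) t := by
    intro t ht
    have hmem : t ∈ Set.Icc (-1:ℝ) 1 := Set.mem_Icc_of_Ioo ht
    have hdiff : DifferentiableWithinAt ℝ h (Set.Icc (-1:ℝ) 1) t :=
      (((differentiable_const (1:ℝ)).sub (differentiable_pow 2)) t).differentiableWithinAt.mul
        (hφ1.differentiableOn one_ne_zero t hmem)
    have h1 := hdiff.hasDerivWithinAt.hasDerivAt (hIoo t ht)
    rwa [hode t hmem] at h1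
  have FTC : ∀ (F D : ℝ → ℝ), ContinuousOn F (Set.Icc (-1:ℝ) 1) →
      (∀ t ∈ Set.Ioo (-1:ℝ) 1, HasDerivAt F (D t) t) →
      ContinuousOn D (Set.Icc (-1:ℝ) 1) →
      ∫ t in (-1:ℝ)..1, D t = F 1 - F (-1) := by
    intro F D hFc hFd hDc
    exact intervalIntegral.integral_eq_sub_of_hasDeriv_right_of_le hle hFc
      (fun t ht => (hFd t ht).hasDerivWithinAt) (CI D hDc)
  -- Step 1 : F₁ = (3t²-1) h
  have hd1 : ∀ t ∈ Set.Ioo (-1:ℝ) 1, HasDerivAt (fun s => (3*s^2 - 1) * h s)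
      (6*(t*h t) + (lam*(3*t^2-1) - lam*((3*t^2-1)*Real.exp (g t)))) t := by
    intro t ht
    have hq : HasDerivAt (fun s : ℝ => 3*s^2 - 1) (6*t) t := by
      have := ((hasDerivAt_pow 2 t).const_mul (3:ℝ)).sub_const 1
      refine this.congr_deriv ?_
      push_cast; ring
    have := hq.mul (hhd t ht)
    refine this.congr_deriv ?_
    ring
  have eq1 : ∫ t in (-1:ℝ)..1,
      (6*(t*h t) + (lam*(3*t^2-1) - lam*((3*t^2-1)*Real.exp (g t)))) = 0 := by
    rw [FTC _ _ (((continuousOn_const.mul (continuousOn_id.pow 2)).sub continuousOn_const).mul hhc)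
        hd1
        (((continuousOn_const.mul (continuousOn_id.mul hhc))).add
          ((continuousOn_const.mul ((continuousOn_const.mul (continuousOn_id.pow 2)).sub
            continuousOn_const)).sub (continuousOn_const.mul
              ((((continuousOn_const.mul (continuousOn_id.pow 2)).sub continuousOn_const)).mul hec))))]
    simp [hhdef]
  -- Step 2 : F₂ = t(1-t²)e^g
  have hd2 : ∀ t ∈ Set.Ioo (-1:ℝ) 1, HasDerivAt (fun s => s*(1-s^2)*Real.exp (g s))
      (t*h t*Real.exp (g t) - (3*t^2-1)*Real.exp (g t)) t := by
    intro t ht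
    have hp : HasDerivAt (fun s : ℝ => s*(1-s^2)) (1-3*t^2) t := by
      have := (hasDerivAt_id t).mul ((hasDerivAt_const t (1:ℝ)).sub (hasDerivAt_pow 2 t))
      refine this.congr_deriv ?_
      simp only [id_eq, Pi.sub_apply]; push_cast; ring
    have := hp.mul ((hgd t ht).exp)
    refine this.congr_deriv ?_
    simp only [hhdef]
    ring
  have eq2 : ∫ t in (-1:ℝ)..1,
      (t*h t*Real.exp (g t) - (3*t^2-1)*Real.exp (g t)) = 0 := by
    rw [FTC _ _ ((continuousOn_id.mul (continuousOn_const.sub (continuousOn_id.pow 2))).mul hec)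
        hd2
        (((continuousOn_id.mul hhc).mul hec).sub
          ((((continuousOn_const.mul (continuousOn_id.pow 2)).sub continuousOn_const)).mul hec))]
    norm_num
  -- Step 3 : F₃ = t h²
  have hd3 : ∀ t ∈ Set.Ioo (-1:ℝ) 1, HasDerivAt (fun s => s * (h s)^2)
      ((h t)^2 + (2*lam*(t*h t) - 2*lam*(t*h t*Real.exp (g t)))) t := by
    intro t ht
    have := (hasDerivAt_id t).mul ((hhd t ht).pow 2)
    refine this.congr_deriv ?_
    simp only [id_eq, Pi.pow_apply]; push_cast; ring
  have eq3 : ∫ t in (-1:ℝ)..1,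
      ((h t)^2 + (2*lam*(t*h t) - 2*lam*(t*h t*Real.exp (g t)))) = 0 := by
    rw [FTC _ _ (continuousOn_id.mul (hhc.pow 2)) hd3
        ((hhc.pow 2).add ((continuousOn_const.mul (continuousOn_id.mul hhc)).sub
          (continuousOn_const.mul ((continuousOn_id.mul hhc).mul hec))))]
    simp [hhdef]
  -- integrability of the pieces
  have ia := CI (fun t => t * h t) (continuousOn_id.mul hhc)
  have ib := CI (fun t => t * h t * Real.exp (g t)) ((continuousOn_id.mul hhc).mul hec)
  have iI := CI (fun t => (3*t^2-1) * Real.exp (g t))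
    ((((continuousOn_const.mul (continuousOn_id.pow 2)).sub continuousOn_const)).mul hec)
  have ip := CI (fun t => 3*t^2-1)
    ((continuousOn_const.mul (continuousOn_id.pow 2)).sub continuousOn_const)
  have ic := CI (fun t => (h t)^2) (hhc.pow 2)
  have hP : (∫ t in (-1:ℝ)..1, (3*t^2-1)) = 0 := by
    have i1 : IntervalIntegrable (fun t : ℝ => 3*t^2) MeasureTheory.volume (-1) 1 :=
      ((continuous_const.mul (continuous_pow 2)).intervalIntegrable _ _)
    rw [intervalIntegral.integral_sub i1 intervalIntegrable_const,
      intervalIntegral.integral_const_mul, integral_pow, intervalIntegral.integral_const]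
    norm_num
  rw [intervalIntegral.integral_add (ia.const_mul 6) ((ip.const_mul lam).sub (iI.const_mul lam)),
    intervalIntegral.integral_sub (ip.const_mul lam) (iI.const_mul lam),
    intervalIntegral.integral_const_mul, intervalIntegral.integral_const_mul,
    intervalIntegral.integral_const_mul, hP] at eq1
  rw [intervalIntegral.integral_sub ib iI] at eq2
  rw [intervalIntegral.integral_add ic ((ia.const_mul (2*lam)).sub (ib.const_mul (2*lam))),
    intervalIntegral.integral_sub (ia.const_mul (2*lam)) (ib.const_mul (2*lam)),
    intervalIntegral.integral_const_mul, intervalIntegral.integral_const_mul] at eq3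
  have hJ : (∫ t in (-1:ℝ)..1, (1 - t ^ 2) ^ 2 * φ t ^ 2) = ∫ t in (-1:ℝ)..1, (h t)^2 := by
    simp only [hhdef, mul_pow]
  rw [hJ]
  linear_combination lam * eq1 - 6*lam * eq2 - 3 * eq3
end
end

section
/- Let u be a solution of the mean field equation Δu = λ(1−e^u) on S² with λ = 6. If u is axially symmetric, i.e. there exists a unit vector e ∈ ℝ³ such that u(x) = u(x') whenever ⟨x,e⟩ = ⟨x',e⟩, then u ≡ 0. -/
open Real MeasureTheory Set Filter Topology

noncomputable section

lemma lap_line {w : ℝ × ℝ → ℝ} (hw : ContDiff ℝ 2 w) (y d : ℝ × ℝ) :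
    iteratedFDeriv ℝ 2 w y ![d, d] =
      deriv (fun s : ℝ => deriv (fun r : ℝ => w (y + r • d)) s) 0 := by
  have hγ : ∀ s : ℝ, HasDerivAt (fun r : ℝ => y + r • d) d s := fun s => by
    simpa using ((hasDerivAt_id s).smul_const d).const_add y
  have hwd : Differentiable ℝ w := hw.differentiable (by norm_num)
  have h1 : ∀ s : ℝ, deriv (fun r : ℝ => w (y + r • d)) s = fderiv ℝ w (y + s • d) d := by
    intro s
    exact ((hwd (y + s • d)).hasFDerivAt.comp_hasDerivAt s (hγ s)).deriv
  have hF : ContDiff ℝ 1 (fderiv ℝ w) := hw.fderiv_right (by norm_num)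
  have h2 : HasDerivAt (fun s : ℝ => fderiv ℝ w (y + s • d) d)
      (fderiv ℝ (fderiv ℝ w) y d d) 0 := by
    have h3 : HasDerivAt (fun s : ℝ => fderiv ℝ w (y + s • d))
        (fderiv ℝ (fderiv ℝ w) y d) 0 := by
      have h4 : HasFDerivAt (fderiv ℝ w) (fderiv ℝ (fderiv ℝ w) (y + (0:ℝ) • d)) (y + (0:ℝ) • d) :=
        ((hF.differentiable one_ne_zero) _).hasFDerivAt
      have := h4.comp_hasDerivAt 0 (hγ 0)
      simpa [Function.comp_def] using this
    exact (ContinuousLinearMap.apply ℝ ℝ d).hasFDerivAt.comp_hasDerivAt 0 h3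
  rw [iteratedFDeriv_two_apply]
  simp only [Matrix.cons_val_zero, Matrix.cons_val_one, Matrix.head_cons]
  rw [funext h1]
  exact h2.deriv.symm


lemma escape (v V1 : ℝ → ℝ) (M ε t₁ : ℝ) (hε : 0 < ε) (ht₁ : t₁ < 1)
    (hv : ∀ t ∈ Set.Ioo t₁ (1:ℝ), HasDerivAt v (V1 t) t)
    (hlow : ∀ t ∈ Set.Ioo t₁ (1:ℝ), ε / (1 - t) ≤ V1 t)
    (hbd : ∀ t ∈ Set.Ioo t₁ (1:ℝ), v t ≤ M) : False := by
  set J := Set.Ioo t₁ (1:ℝ) with hJ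
  set ψ : ℝ → ℝ := fun t => v t + ε * Real.log (1 - t) with hψdef
  have hψ : ∀ t ∈ J, HasDerivAt ψ (V1 t - ε / (1 - t)) t := by
    intro t ht
    have h1t : (1:ℝ) - t ≠ 0 := by
      have := ht.2; intro h; nlinarith [ht.2]
    have hlog : HasDerivAt (fun t : ℝ => Real.log (1 - t)) ((1 - t)⁻¹ * (-1)) t := by
      have hin : HasDerivAt (fun t : ℝ => 1 - t) (-1) t := by
        simpa using (hasDerivAt_id t).const_sub 1
      exact (Real.hasDerivAt_log h1t).comp t hin
    have := (hv t ht).add ((hlog.const_mul ε))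
    refine this.congr_deriv ?_
    field_simp
    ring
  have hcont : ContinuousOn ψ J := fun t ht => (hψ t ht).continuousAt.continuousWithinAt
  have hmono : MonotoneOn ψ J := by
    apply monotoneOn_of_deriv_nonneg (convex_Ioo _ _) hcont
    · intro x hx
      rw [interior_Ioo] at hx
      exact ((hψ x hx).differentiableAt).differentiableWithinAt
    · intro x hx
      rw [interior_Ioo] at hx
      rw [(hψ x hx).deriv]
      have := hlow x hx
      linarith
  set s := (t₁ + 1) / 2 with hs
  have hsJ : s ∈ J := by constructor <;> (simp [hs]; linarith)
  set C := ψ s with hC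
  set r := Real.exp ((C - M - 1) / ε) with hr
  have hrpos : 0 < r := Real.exp_pos _
  set δ := min r (1 - s) with hδ
  have hδpos : 0 < δ := lt_min hrpos (by simp [hs]; linarith)
  set t := 1 - δ / 2 with htdef
  have hts : s < t := by
    have h1 : δ ≤ 1 - s := min_le_right _ _
    have := hsJ.2
    simp only [htdef]
    nlinarith
  have htJ : t ∈ J := ⟨lt_trans hsJ.1 hts, by simp only [htdef]; linarith⟩
  have hmle := hmono hsJ htJ (le_of_lt hts)
  have hlogle : Real.log (1 - t) ≤ (C - M - 1) / ε := by
    have h1t : 1 - t = δ / 2 := by simp [htdef]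
    rw [h1t]
    calc Real.log (δ / 2) ≤ Real.log r := by
          apply Real.log_le_log (by positivity)
          have : δ ≤ r := min_le_left _ _
          linarith
      _ = (C - M - 1) / ε := Real.log_exp _
  have hvt : v t ≤ M := hbd t htJ
  have hfin : Real.log (1 - t) * ε ≤ C - M - 1 := (le_div_iff₀ hε).mp hlogle
  have hmle2 : C ≤ v t + ε * Real.log (1 - t) := hmle
  nlinarith [hmle2, hvt, hfin]

lemma endpoint_zero (v V1 : ℝ → ℝ) (M l : ℝ)
    (hv : ∀ t ∈ Set.Ioo (-1:ℝ) 1, HasDerivAt v (V1 t) t)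
    (hbd : ∀ t ∈ Set.Ioo (-1:ℝ) 1, |v t| ≤ M)
    (htend : Filter.Tendsto (fun t => (1 - t^2) * V1 t)
      (nhdsWithin 1 (Set.Ioo (-1:ℝ) 1)) (nhds l)) : l = 0 := by
  by_contra hl
  rcases (Ne.lt_or_gt hl) with hneg | hpos
  · -- l < 0 : apply escape to -v
    have hev : ∀ᶠ t in nhdsWithin 1 (Set.Ioo (-1:ℝ) 1), (1 - t^2) * V1 t < l / 2 :=
      htend.eventually (Filter.Tendsto.eventually_lt_const (by linarith) tendsto_id)
    rw [eventually_nhdsWithin_iff] at hev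
    rcases Metric.eventually_nhds_iff.mp hev with ⟨δ, hδpos, hδ⟩
    set t₁ : ℝ := max 0 (1 - δ / 2) with ht₁
    have ht₁1 : t₁ < 1 := by
      apply max_lt one_pos; linarith
    have hsub : ∀ t ∈ Set.Ioo t₁ (1:ℝ), t ∈ Set.Ioo (-1:ℝ) 1 ∧ (1 - t^2) * V1 t < l / 2 := by
      intro t ht
      have h0 : (0:ℝ) ≤ t₁ := le_max_left _ _
      have htI : t ∈ Set.Ioo (-1:ℝ) 1 := ⟨by linarith [ht.1], ht.2⟩
      refine ⟨htI, ?_⟩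
      apply hδ ?_ htI
      have : 1 - δ / 2 ≤ t₁ := le_max_right _ _
      have := ht.1; have := ht.2
      rw [Real.dist_eq, abs_lt]
      constructor <;> linarith
    apply escape (fun t => -v t) (fun t => -V1 t) M (-l/4) t₁ (by linarith) ht₁1
    · intro t ht
      exact ((hv t (hsub t ht).1).neg)
    · intro t ht
      have h2 := (hsub t ht).2
      have h0 : (0:ℝ) ≤ t₁ := le_max_left _ _
      have ht0 : 0 < t := lt_of_le_of_lt h0 ht.1
      have ht1 : t < 1 := ht.2
      rw [div_le_iff₀ (by linarith : (0:ℝ) < 1 - t)]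
      nlinarith
    · intro t ht
      have := hbd t (hsub t ht).1
      rw [abs_le] at this; linarith
  · -- l > 0
    have hev : ∀ᶠ t in nhdsWithin 1 (Set.Ioo (-1:ℝ) 1), l / 2 < (1 - t^2) * V1 t :=
      htend.eventually (Filter.Tendsto.eventually_const_lt (by linarith) tendsto_id)
    rw [eventually_nhdsWithin_iff] at hev
    rcases Metric.eventually_nhds_iff.mp hev with ⟨δ, hδpos, hδ⟩
    set t₁ : ℝ := max 0 (1 - δ / 2) with ht₁
    have ht₁1 : t₁ < 1 := by
      apply max_lt one_pos; linarith
    have hsub : ∀ t ∈ Set.Ioo t₁ (1:ℝ), t ∈ Set.Ioo (-1:ℝ) 1 ∧ l / 2 < (1 - t^2) * V1 t := by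
      intro t ht
      have h0 : (0:ℝ) ≤ t₁ := le_max_left _ _
      have htI : t ∈ Set.Ioo (-1:ℝ) 1 := ⟨by linarith [ht.1], ht.2⟩
      refine ⟨htI, ?_⟩
      apply hδ ?_ htI
      have : 1 - δ / 2 ≤ t₁ := le_max_right _ _
      have := ht.1; have := ht.2
      rw [Real.dist_eq, abs_lt]
      constructor <;> linarith
    apply escape v V1 M (l/4) t₁ (by linarith) ht₁1
    · intro t ht
      exact hv t (hsub t ht).1
    · intro t ht
      have h2 := (hsub t ht).2
      have h0 : (0:ℝ) ≤ t₁ := le_max_left _ _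
      have ht0 : 0 < t := lt_of_le_of_lt h0 ht.1
      have ht1 : t < 1 := ht.2
      rw [div_le_iff₀ (by linarith : (0:ℝ) < 1 - t)]
      nlinarith
    · intro t ht
      have := hbd t (hsub t ht).1
      rw [abs_le] at this; linarith


lemma ode_G_nonneg (v V1 V2 : ℝ → ℝ) (M : ℝ)
    (hv : ∀ t ∈ Set.Ioo (-1:ℝ) 1, HasDerivAt v (V1 t) t)
    (hV1 : ∀ t ∈ Set.Ioo (-1:ℝ) 1, HasDerivAt V1 (V2 t) t)
    (hode : ∀ t ∈ Set.Ioo (-1:ℝ) 1,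
      (1 - t^2) * V2 t - 2*t*V1 t = 6*(1 - Real.exp (v t)))
    (hbd : ∀ t ∈ Set.Ioo (-1:ℝ) 1, |v t| ≤ M) :
    ∀ t ∈ Set.Ioo (-1:ℝ) 1,
      0 ≤ t*(1-t^2)*(6*(1 - Real.exp (v t))) - (1-3*t^2)*((1-t^2)*V1 t)
          - t*((1-t^2)*V1 t)^2/2 := by
  set I := Set.Ioo (-1:ℝ) 1 with hI
  set z : ℝ → ℝ := fun t => (1-t^2) * V1 t with hzdef
  set zp : ℝ → ℝ := fun t => 6*(1 - Real.exp (v t)) with hzpdef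
  set G : ℝ → ℝ := fun t => t*(1-t^2)*zp t - (1-3*t^2)*z t - t*(z t)^2/2 with hGdef
  have hq : ∀ t : ℝ, HasDerivAt (fun t : ℝ => 1 - t^2) (-(2*t)) t := by
    intro t
    simpa using (hasDerivAt_pow 2 t).const_sub 1
  have hz : ∀ t ∈ I, HasDerivAt z (zp t) t := by
    intro t ht
    have h := (hq t).mul (hV1 t ht)
    have heq : -(2*t) * V1 t + (1 - t^2) * V2 t = zp t := by
      have := hode t ht; simp only [hzpdef]; linarith
    rw [heq] at h; exact h
  have hzp : ∀ t ∈ I, HasDerivAt zp (-6 * Real.exp (v t) * V1 t) t := by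
    intro t ht
    have h := (((hv t ht).exp).const_sub 1).const_mul 6
    refine h.congr_deriv ?_; ring
  have hG : ∀ t ∈ I, HasDerivAt G (-(z t)^2/2) t := by
    intro t ht
    have hA : HasDerivAt (fun t : ℝ => t*(1-t^2)) (1 - 3*t^2) t := by
      have := (hasDerivAt_id t).mul (hq t)
      refine this.congr_deriv ?_; simp only [id_eq]; ring
    have hB : HasDerivAt (fun t : ℝ => 1-3*t^2) (-(6*t)) t := by
      have := ((hasDerivAt_pow 2 t).const_mul 3).const_sub 1
      refine this.congr_deriv ?_; push_cast; ring
    have h1 : HasDerivAt (fun t => t*(1-t^2)*zp t)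
        ((1-3*t^2) * zp t + t*(1-t^2) * (-6 * Real.exp (v t) * V1 t)) t :=
      hA.mul (hzp t ht)
    have h2 : HasDerivAt (fun t => (1-3*t^2)*z t)
        (-(6*t) * z t + (1-3*t^2) * zp t) t := hB.mul (hz t ht)
    have h3 : HasDerivAt (fun t => t*(z t)^2/2)
        ((1 * (z t)^2 + t * (2 * z t ^ (2-1) * zp t))/2) t := by
      exact ((hasDerivAt_id t).mul ((hz t ht).pow 2)).div_const 2
    have h := (h1.sub h2).sub h3
    refine h.congr_deriv ?_
    simp only [hzdef, hzpdef]
    ring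
  -- Lipschitz bound for z
  set Kr : ℝ := 6*(1 + Real.exp M) with hKr
  have hKrpos : 0 < Kr := by positivity
  have hzpbd : ∀ t ∈ I, |zp t| ≤ Kr := by
    intro t ht
    have h1 : Real.exp (v t) ≤ Real.exp M := by
      apply Real.exp_le_exp.mpr; have := hbd t ht; rw [abs_le] at this; linarith
    have h2 : 0 < Real.exp (v t) := Real.exp_pos _
    rw [abs_le]; constructor <;> (simp only [hzpdef]; nlinarith)
  have hlip : LipschitzOnWith (Real.toNNReal Kr) z I := by
    apply (convex_Ioo _ _).lipschitzOnWith_of_nnnorm_hasDerivWithin_le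
      (f' := zp) (fun t ht => (hz t ht).hasDerivWithinAt)
    intro t ht
    rw [← NNReal.coe_le_coe]
    simp only [coe_nnnorm, Real.norm_eq_abs, Real.coe_toNNReal _ (le_of_lt hKrpos)]
    exact hzpbd t ht
  obtain ⟨g, hg, heq⟩ := hlip.extend_real
  have htendz : Filter.Tendsto z (nhdsWithin 1 I) (nhds (g 1)) := by
    have h1 : Filter.Tendsto g (nhdsWithin 1 I) (nhds (g 1)) :=
      (hg.continuous.tendsto 1).mono_left nhdsWithin_le_nhds
    apply h1.congr'
    filter_upwards [self_mem_nhdsWithin] with t ht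
    exact (heq ht).symm
  have hg1 : g 1 = 0 := by
    apply endpoint_zero v V1 M (g 1) hv hbd
    exact htendz
  rw [hg1] at htendz
  -- G tends to 0 at 1 within I
  have htendG : Filter.Tendsto G (nhdsWithin 1 I) (nhds 0) := by
    have hA : Filter.Tendsto (fun t => t*(1-t^2)*zp t) (nhdsWithin 1 I) (nhds 0) := by
      apply squeeze_zero_norm'
      · filter_upwards [self_mem_nhdsWithin] with t ht
        have := hzpbd t ht
        have h0 : 0 ≤ |zp t| := abs_nonneg _
        calc ‖t*(1-t^2)*zp t‖ = |t| * |1-t^2| * |zp t| := by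
              rw [Real.norm_eq_abs, abs_mul, abs_mul]
          _ ≤ |t| * |1-t^2| * Kr := by
              apply mul_le_mul_of_nonneg_left this; positivity
      · have hcont : Continuous (fun t : ℝ => |t| * |1-t^2| * Kr) := by
          apply Continuous.mul _ continuous_const
          exact (continuous_abs).mul ((continuous_const.sub (continuous_pow 2)).abs)
        have := (hcont.tendsto 1).mono_left (nhdsWithin_le_nhds (s := I))
        simpa using this
    have hBc : Filter.Tendsto (fun t : ℝ => 1-3*t^2) (nhdsWithin 1 I) (nhds (-2)) := by
      have hcont : Continuous (fun t : ℝ => 1-3*t^2) :=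
        continuous_const.sub (continuous_const.mul (continuous_pow 2))
      have := (hcont.tendsto 1).mono_left (nhdsWithin_le_nhds (s := I))
      simpa using (by norm_num : (1:ℝ)-3*1^2 = -2) ▸ this
    have hB : Filter.Tendsto (fun t => (1-3*t^2)*z t) (nhdsWithin 1 I) (nhds 0) := by
      have := hBc.mul htendz
      simpa using this
    have hCt : Filter.Tendsto (fun t : ℝ => t) (nhdsWithin 1 I) (nhds 1) :=
      (continuous_id.tendsto 1).mono_left nhdsWithin_le_nhds
    have hC : Filter.Tendsto (fun t => t*(z t)^2/2) (nhdsWithin 1 I) (nhds 0) := by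
      have := (hCt.mul (htendz.pow 2)).div_const 2
      simpa using this
    have := (hA.sub hB).sub hC
    simpa using this
  -- G is antitone on I
  have hGanti : AntitoneOn G I := by
    apply antitoneOn_of_deriv_nonpos (convex_Ioo _ _)
    · exact fun t ht => (hG t ht).continuousAt.continuousWithinAt
    · intro t ht
      rw [interior_Ioo] at ht
      exact ((hG t ht).differentiableAt).differentiableWithinAt
    · intro t ht
      rw [interior_Ioo] at ht
      rw [(hG t ht).deriv]
      have : 0 ≤ (z t)^2 := sq_nonneg _
      linarith
  -- conclude
  intro t ht
  have hev : ∀ᶠ s in nhdsWithin 1 I, G s ≤ G t := by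
    have h1 : ∀ᶠ s in nhdsWithin 1 I, s ∈ I := self_mem_nhdsWithin
    have h2 : ∀ᶠ s : ℝ in nhds 1, t < s := eventually_gt_nhds ht.2
    filter_upwards [h1, h2.filter_mono nhdsWithin_le_nhds] with s hs hts
    exact hGanti ht hs (le_of_lt hts)
  haveI : (nhdsWithin (1:ℝ) I).NeBot := by
    apply mem_closure_iff_nhdsWithin_neBot.mp
    rw [hI, closure_Ioo (by norm_num : (-1:ℝ) ≠ 1)]
    exact ⟨by norm_num, le_refl 1⟩
  have := le_of_tendsto htendG hev
  simpa only [hGdef, hzdef, hzpdef] using this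

lemma ode_zero (v V1 V2 : ℝ → ℝ) (M : ℝ)
    (hv : ∀ t ∈ Set.Ioo (-1:ℝ) 1, HasDerivAt v (V1 t) t)
    (hV1 : ∀ t ∈ Set.Ioo (-1:ℝ) 1, HasDerivAt V1 (V2 t) t)
    (hode : ∀ t ∈ Set.Ioo (-1:ℝ) 1,
      (1 - t^2) * V2 t - 2*t*V1 t = 6*(1 - Real.exp (v t)))
    (hbd : ∀ t ∈ Set.Ioo (-1:ℝ) 1, |v t| ≤ M) :
    ∀ t ∈ Set.Ioo (-1:ℝ) 1, v t = 0 := by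
  set I := Set.Ioo (-1:ℝ) 1 with hI
  have hmem : ∀ t : ℝ, t ∈ I → -t ∈ I := by
    intro t ht; exact ⟨by linarith [ht.2], by linarith [ht.1]⟩
  have hGpos := ode_G_nonneg v V1 V2 M hv hV1 hode hbd
  -- reflected data
  have hvr : ∀ t ∈ I, HasDerivAt (fun t => v (-t)) (-V1 (-t)) t := by
    intro t ht
    have h := (hv (-t) (hmem t ht)).comp t (hasDerivAt_neg t)
    simpa [mul_comm, Function.comp_def] using h
  have hV1r : ∀ t ∈ I, HasDerivAt (fun t => -V1 (-t)) (V2 (-t)) t := by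
    intro t ht
    have h := ((hV1 (-t) (hmem t ht)).comp t (hasDerivAt_neg t)).neg
    simpa [mul_comm, Function.comp_def, Pi.neg_def] using h
  have hoder : ∀ t ∈ I, (1 - t^2) * V2 (-t) - 2*t*(-V1 (-t)) = 6*(1 - Real.exp (v (-t))) := by
    intro t ht
    have h := hode (-t) (hmem t ht)
    have e1 : (1:ℝ) - (-t)^2 = 1 - t^2 := by ring
    rw [e1] at h
    linarith [h]
  have hbdr : ∀ t ∈ I, |v (-t)| ≤ M := fun t ht => hbd (-t) (hmem t ht)
  have hGneg := ode_G_nonneg (fun t => v (-t)) (fun t => -V1 (-t)) (fun t => V2 (-t)) M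
    hvr hV1r hoder hbdr
  -- G vanishes identically
  have hGzero : ∀ t ∈ I,
      t*(1-t^2)*(6*(1 - Real.exp (v t))) - (1-3*t^2)*((1-t^2)*V1 t)
        - t*((1-t^2)*V1 t)^2/2 = 0 := by
    intro t ht
    have h1 := hGpos t ht
    have h2 := hGneg (-t) (hmem t ht)
    simp only [neg_neg] at h2
    nlinarith [h1, h2]
  -- z = 0 on I
  have hq : ∀ t : ℝ, HasDerivAt (fun t : ℝ => 1 - t^2) (-(2*t)) t := by
    intro t
    simpa using (hasDerivAt_pow 2 t).const_sub 1
  have hz : ∀ t ∈ I, HasDerivAt (fun t => (1-t^2) * V1 t) (6*(1 - Real.exp (v t))) t := by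
    intro t ht
    have h := (hq t).mul (hV1 t ht)
    have heq : -(2*t) * V1 t + (1 - t^2) * V2 t = 6*(1 - Real.exp (v t)) := by
      have := hode t ht; linarith
    rw [heq] at h; exact h
  -- derivative of G is zero since G ≡ 0; reuse: at each t, HasDerivAt G (-(z t)^2/2) t.
  have hzzero : ∀ t ∈ I, (1-t^2) * V1 t = 0 := by
    intro t ht
    -- build HasDerivAt G value at t as in ode_G_nonneg
    have hzp : ∀ s ∈ I, HasDerivAt (fun s => 6*(1 - Real.exp (v s))) (-6 * Real.exp (v s) * V1 s) s := by
      intro s hs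
      have h := (((hv s hs).exp).const_sub 1).const_mul 6
      refine h.congr_deriv ?_; ring
    have hA : HasDerivAt (fun t : ℝ => t*(1-t^2)) (1 - 3*t^2) t := by
      have := (hasDerivAt_id t).mul (hq t)
      refine this.congr_deriv ?_; simp only [id_eq]; ring
    have hB : HasDerivAt (fun t : ℝ => 1-3*t^2) (-(6*t)) t := by
      have := ((hasDerivAt_pow 2 t).const_mul 3).const_sub 1
      refine this.congr_deriv ?_; push_cast; ring
    have h1 : HasDerivAt (fun s => s*(1-s^2)*(6*(1 - Real.exp (v s))))
        ((1-3*t^2) * (6*(1 - Real.exp (v t))) + t*(1-t^2) * (-6 * Real.exp (v t) * V1 t)) t :=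
      hA.mul (hzp t ht)
    have h2 : HasDerivAt (fun s => (1-3*s^2)*((1-s^2) * V1 s))
        (-(6*t) * ((1-t^2) * V1 t) + (1-3*t^2) * (6*(1 - Real.exp (v t)))) t :=
      hB.mul (hz t ht)
    have h3 : HasDerivAt (fun s => s*((1-s^2) * V1 s)^2/2)
        ((1 * ((1-t^2) * V1 t)^2 + t * (2 * ((1-t^2) * V1 t) ^ (2-1) * (6*(1 - Real.exp (v t)))))/2) t :=
      ((hasDerivAt_id t).mul ((hz t ht).pow 2)).div_const 2
    have hGd := (h1.sub h2).sub h3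
    -- G is eventually 0 near t
    have hev : (fun s => s*(1-s^2)*(6*(1 - Real.exp (v s))) - (1-3*s^2)*((1-s^2) * V1 s)
        - s*((1-s^2) * V1 s)^2/2) =ᶠ[nhds t] (fun _ => (0:ℝ)) := by
      filter_upwards [Ioo_mem_nhds ht.1 ht.2] with s hs
      exact hGzero s hs
    have hGd0 := hGd.congr_of_eventuallyEq hev.symm
    have huniq := hGd0.unique (hasDerivAt_const t 0)
    -- derivative formula equals -(z t)^2/2 after algebra
    have halg : (1-3*t^2) * (6*(1 - Real.exp (v t))) + t*(1-t^2) * (-6 * Real.exp (v t) * V1 t)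
        - (-(6*t) * ((1-t^2) * V1 t) + (1-3*t^2) * (6*(1 - Real.exp (v t))))
        - (1 * ((1-t^2) * V1 t)^2 + t * (2 * ((1-t^2) * V1 t) ^ (2-1) * (6*(1 - Real.exp (v t)))))/2
        = -((1-t^2) * V1 t)^2/2 := by
      ring
    rw [halg] at huniq
    have : ((1-t^2) * V1 t)^2 = 0 := by linarith
    exact pow_eq_zero_iff (by norm_num) |>.mp this
  have hV1zero : ∀ t ∈ I, V1 t = 0 := by
    intro t ht
    have h := hzzero t ht
    have hne : (1:ℝ) - t^2 ≠ 0 := by nlinarith [ht.1, ht.2]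
    exact (mul_eq_zero.mp h).resolve_left hne
  -- v constant on I
  have hconst : ∀ t ∈ I, v t = v 0 := by
    have h0 : (0:ℝ) ∈ I := by constructor <;> norm_num
    have hmono : MonotoneOn v I := by
      apply monotoneOn_of_deriv_nonneg (convex_Ioo _ _)
        (fun t ht => (hv t ht).continuousAt.continuousWithinAt)
      · intro t ht
        rw [interior_Ioo] at ht
        exact ((hv t ht).differentiableAt).differentiableWithinAt
      · intro t ht
        rw [interior_Ioo] at ht
        rw [(hv t ht).deriv, hV1zero t ht]
    have hanti : AntitoneOn v I := by
      apply antitoneOn_of_deriv_nonpos (convex_Ioo _ _)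
        (fun t ht => (hv t ht).continuousAt.continuousWithinAt)
      · intro t ht
        rw [interior_Ioo] at ht
        exact ((hv t ht).differentiableAt).differentiableWithinAt
      · intro t ht
        rw [interior_Ioo] at ht
        rw [(hv t ht).deriv, hV1zero t ht]
    intro t ht
    rcases le_total t 0 with h | h
    · exact le_antisymm (hmono ht h0 h) (hanti ht h0 h)
    · exact le_antisymm (hanti h0 ht h) (hmono h0 ht h)
  -- value at 0
  have h00 : (0:ℝ) ∈ I := by constructor <;> norm_num
  have hV20 : V2 0 = 0 := by
    have hd := hV1 0 h00
    have hev : V1 =ᶠ[nhds 0] (fun _ => (0:ℝ)) := by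
      filter_upwards [Ioo_mem_nhds h00.1 h00.2] with s hs
      exact hV1zero s hs
    exact (hd.congr_of_eventuallyEq hev.symm).unique (hasDerivAt_const 0 0)
  have hvzero : v 0 = 0 := by
    have h := hode 0 h00
    rw [hV20, hV1zero 0 h00] at h
    simp at h
    have : Real.exp (v 0) = 1 := by linarith
    exact Real.exp_injective (by rw [this, Real.exp_zero])
  intro t ht
  rw [hconst t ht, hvzero]


noncomputable def Lfun (a b c : ℝ) (y : ℝ × ℝ) : ℝ :=
  (2*y.1*a + 2*y.2*b + (y.1^2+y.2^2-1)*c)/(1+y.1^2+y.2^2)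





lemma stereoN_mem (y : ℝ × ℝ) : stereoN y ∈ sphere3 := by
  have hQ : (1 + y.1^2 + y.2^2) ≠ 0 := by positivity
  simp only [sphere3, stereoN, Set.mem_setOf_eq, Matrix.cons_val_zero, Matrix.cons_val_one,
    Matrix.head_cons, Matrix.cons_val_two, Matrix.tail_cons]
  field_simp
  ring

lemma phi_stereoN (a b c : ℝ) (y : ℝ × ℝ) :
    stereoN y 0 * a + stereoN y 1 * b + stereoN y 2 * c = Lfun a b c y := by
  have hQ : (1 + y.1^2 + y.2^2) ≠ 0 := by positivity
  simp only [stereoN, Lfun, Matrix.cons_val_zero, Matrix.cons_val_one,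
    Matrix.head_cons, Matrix.cons_val_two, Matrix.tail_cons]
  field_simp
  try ring

lemma stereoN_proj (x : Fin 3 → ℝ) (hx : x ∈ sphere3) (h2 : x 2 ≠ 1) :
    stereoN (x 0 / (1 - x 2), x 1 / (1 - x 2)) = x := by
  have hx' : x 0 ^ 2 + x 1 ^ 2 + x 2 ^ 2 = 1 := hx
  have h2' : 1 - x 2 ≠ 0 := fun h => h2 (by linarith [sub_eq_zero.mp h])
  have hkey : 1 + (x 0 / (1 - x 2))^2 + (x 1 / (1 - x 2))^2 = 2/(1 - x 2) := by
    field_simp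
    nlinarith [hx']
  funext i
  fin_cases i
  · show 2 * (x 0 / (1 - x 2)) / _ = x 0
    rw [hkey]
    field_simp
  · show 2 * (x 1 / (1 - x 2)) / _ = x 1
    rw [hkey]
    field_simp
  · show ((x 0 / (1 - x 2))^2 + (x 1 / (1 - x 2))^2 - 1) / _ = x 2
    rw [div_eq_iff (by rw [hkey]; positivity), hkey]
    field_simp
    nlinarith [hx']

lemma exists_orth (a b c : ℝ) (_he : a^2+b^2+c^2 = 1) :
    ∃ a' b' c' : ℝ, a'^2+b'^2+c'^2 = 1 ∧ a*a'+b*b'+c*c' = 0 := by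
  by_cases h : a^2+b^2 = 0
  · have ha : a = 0 := by nlinarith [sq_nonneg a, sq_nonneg b]
    exact ⟨1, 0, 0, by norm_num, by rw [ha]; ring⟩
  · have hpos : 0 < a^2+b^2 := lt_of_le_of_ne (by positivity) (Ne.symm h)
    have hs : Real.sqrt (a^2+b^2)^2 = a^2+b^2 := Real.sq_sqrt hpos.le
    have hsne : Real.sqrt (a^2+b^2) ≠ 0 := by
      intro hh; rw [hh] at hs; simp at hs; exact h hs.symm
    refine ⟨-b/Real.sqrt (a^2+b^2), a/Real.sqrt (a^2+b^2), 0, ?_, ?_⟩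
    · field_simp
      linarith [hs]
    · field_simp
      ring

lemma v_contDiffAt (a b c a' b' c' : ℝ) (he : a^2+b^2+c^2 = 1) (he' : a'^2+b'^2+c'^2 = 1)
    (horth : a*a'+b*b'+c*c' = 0) (u : (Fin 3 → ℝ) → ℝ) (v : ℝ → ℝ)
    (hvL : ∀ y, u (stereoN y) = v (Lfun a b c y))
    (hw : ContDiff ℝ 2 (fun y => u (stereoN y)))
    (t₀ : ℝ) (ht₀ : t₀ ∈ Set.Ioo (-1:ℝ) 1)
    (hne : t₀*c + Real.sqrt (1-t₀^2)*c' ≠ 1) :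
    ContDiffAt ℝ 2 v t₀ ∧ Lfun a b c
      ((t₀*a + Real.sqrt (1-t₀^2)*a') / (1 - (t₀*c + Real.sqrt (1-t₀^2)*c')),
       (t₀*b + Real.sqrt (1-t₀^2)*b') / (1 - (t₀*c + Real.sqrt (1-t₀^2)*c'))) = t₀ := by
  set pc : ℝ → Fin 3 → ℝ := fun t =>
    ![t*a + Real.sqrt (1-t^2)*a', t*b + Real.sqrt (1-t^2)*b', t*c + Real.sqrt (1-t^2)*c'] with hpc
  set yc : ℝ → ℝ × ℝ := fun t =>
    ((t*a + Real.sqrt (1-t^2)*a') / (1 - (t*c + Real.sqrt (1-t^2)*c')),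
     (t*b + Real.sqrt (1-t^2)*b') / (1 - (t*c + Real.sqrt (1-t^2)*c'))) with hyc
  -- basic facts about the curve
  have hsphere : ∀ t : ℝ, -1 ≤ t → t ≤ 1 → pc t ∈ sphere3 := by
    intro t h1 h2
    have hs2 : Real.sqrt (1-t^2)^2 = 1-t^2 := Real.sq_sqrt (by nlinarith)
    show (t*a + Real.sqrt (1-t^2)*a')^2 + (t*b + Real.sqrt (1-t^2)*b')^2
      + (t*c + Real.sqrt (1-t^2)*c')^2 = 1
    linear_combination t^2*he + Real.sqrt (1-t^2)^2*he' + 2*t*Real.sqrt (1-t^2)*horth + hs2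
  have hphi : ∀ t : ℝ, -1 ≤ t → t ≤ 1 →
      (pc t 0) * a + (pc t 1) * b + (pc t 2) * c = t := by
    intro t h1 h2
    show (t*a + Real.sqrt (1-t^2)*a')*a + (t*b + Real.sqrt (1-t^2)*b')*b
      + (t*c + Real.sqrt (1-t^2)*c')*c = t
    linear_combination t*he + Real.sqrt (1-t^2)*horth
  -- key identity near t₀
  have hkey : ∀ t : ℝ, t ∈ Set.Ioo (-1:ℝ) 1 → (pc t) 2 ≠ 1 → Lfun a b c (yc t) = t := by
    intro t ht hc
    have hmem := hsphere t ht.1.le ht.2.le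
    have hproj := stereoN_proj (pc t) hmem hc
    have hyceq : yc t = ((pc t) 0 / (1 - (pc t) 2), (pc t) 1 / (1 - (pc t) 2)) := by
      simp only [hyc, hpc]
      norm_num [Matrix.cons_val_zero, Matrix.cons_val_one, Matrix.head_cons,
        Matrix.cons_val_two, Matrix.tail_cons]
    rw [← phi_stereoN a b c (yc t), hyceq, hproj]
    exact hphi t ht.1.le ht.2.le
  have hpc2 : (pc t₀) 2 = t₀*c + Real.sqrt (1-t₀^2)*c' := by
    simp [hpc, Matrix.cons_val_two, Matrix.tail_cons]
  constructor
  · -- regularity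
    have hsqrt : ContDiffAt ℝ 2 (fun t : ℝ => Real.sqrt (1-t^2)) t₀ := by
      have hpos : (1:ℝ) - t₀^2 ≠ 0 := by nlinarith [ht₀.1, ht₀.2]
      have hinner : ContDiffAt ℝ 2 (fun t : ℝ => 1-t^2) t₀ :=
        (contDiff_const.sub (contDiff_id.pow 2)).contDiffAt
      exact (Real.contDiffAt_sqrt hpos).comp t₀ hinner
    have hid : ContDiffAt ℝ 2 (fun t : ℝ => t) t₀ := contDiff_id.contDiffAt
    have hproj2 : ContDiffAt ℝ 2 (fun t : ℝ => 1 - (t*c + Real.sqrt (1-t^2)*c')) t₀ :=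
      contDiffAt_const.sub ((hid.mul contDiffAt_const).add (hsqrt.mul contDiffAt_const))
    have hden : (1 : ℝ) - (t₀*c + Real.sqrt (1-t₀^2)*c') ≠ 0 := by
      intro hh; apply hne; linarith [sub_eq_zero.mp hh]
    have hyc_reg : ContDiffAt ℝ 2 yc t₀ := by
      apply ContDiffAt.prodMk
      · exact (((hid.mul contDiffAt_const).add (hsqrt.mul contDiffAt_const)).div hproj2 hden)
      · exact (((hid.mul contDiffAt_const).add (hsqrt.mul contDiffAt_const)).div hproj2 hden)
    have hcomp : ContDiffAt ℝ 2 (fun t => (fun y => u (stereoN y)) (yc t)) t₀ :=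
      hw.contDiffAt.comp t₀ hyc_reg
    apply hcomp.congr_of_eventuallyEq
    -- v =ᶠ w ∘ yc
    have hevI : ∀ᶠ t : ℝ in nhds t₀, t ∈ Set.Ioo (-1:ℝ) 1 :=
      eventually_of_mem (Ioo_mem_nhds ht₀.1 ht₀.2) (fun t ht => ht)
    have hcont2 : ContinuousAt (fun t : ℝ => (pc t) 2) t₀ := by
      rw [show (fun t : ℝ => (pc t) 2) = fun t : ℝ => t*c + Real.sqrt (1-t^2)*c' from rfl]
      exact ((continuous_id.mul continuous_const).add
        (((continuous_const.sub (continuous_pow 2)).sqrt).mul continuous_const)).continuousAt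
    have hevne : ∀ᶠ t : ℝ in nhds t₀, (pc t) 2 ≠ 1 := by
      have : (pc t₀) 2 ≠ 1 := by rw [hpc2]; exact hne
      exact hcont2.eventually_ne this
    filter_upwards [hevI, hevne] with t ht hc
    have h5 := hvL (yc t)
    rw [hkey t ht hc] at h5
    exact h5.symm
  · -- the point identity
    have := hkey t₀ ht₀ (by rw [hpc2]; exact hne)
    simpa [hyc] using this




lemma dir_second_deriv (a b c : ℝ) (w : ℝ × ℝ → ℝ) (hw : ContDiff ℝ 2 w)
    (v V1 V2 : ℝ → ℝ) (t₀ : ℝ) (ht₀ : t₀ ∈ Set.Ioo (-1:ℝ) 1)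
    (hv1 : ∀ t ∈ Set.Ioo (-1:ℝ) 1, HasDerivAt v (V1 t) t)
    (hV2 : HasDerivAt V1 (V2 t₀) t₀)
    (hvL : ∀ y, w y = v (Lfun a b c y))
    (y₀ : ℝ × ℝ) (hL0 : Lfun a b c y₀ = t₀) (d1 d2 : ℝ) :
    iteratedFDeriv ℝ 2 w y₀ ![(d1,d2),(d1,d2)] =
      V2 t₀ * ((( 2*d1*a + 2*d2*b + (2*y₀.1*d1+2*y₀.2*d2)*c) * (1+y₀.1^2+y₀.2^2)
          - (2*y₀.1*a + 2*y₀.2*b + (y₀.1^2+y₀.2^2-1)*c) * (2*y₀.1*d1+2*y₀.2*d2))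
          / (1+y₀.1^2+y₀.2^2)^2)^2
      + V1 t₀ * ((((2*(d1^2+d2^2)*c) * (1+y₀.1^2+y₀.2^2)
            + (2*d1*a + 2*d2*b + (2*y₀.1*d1+2*y₀.2*d2)*c) * (2*y₀.1*d1+2*y₀.2*d2)
            - ((2*d1*a + 2*d2*b + (2*y₀.1*d1+2*y₀.2*d2)*c) * (2*y₀.1*d1+2*y₀.2*d2)
              + (2*y₀.1*a + 2*y₀.2*b + (y₀.1^2+y₀.2^2-1)*c) * (2*(d1^2+d2^2)))) * ((1+y₀.1^2+y₀.2^2)^2)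
          - ((2*d1*a + 2*d2*b + (2*y₀.1*d1+2*y₀.2*d2)*c) * (1+y₀.1^2+y₀.2^2)
            - (2*y₀.1*a + 2*y₀.2*b + (y₀.1^2+y₀.2^2-1)*c) * (2*y₀.1*d1+2*y₀.2*d2))
            * (2*(1+y₀.1^2+y₀.2^2)*(2*y₀.1*d1+2*y₀.2*d2)))
          / ((1+y₀.1^2+y₀.2^2)^2)^2) := by
  set y1 := y₀.1 with hy1
  set y2 := y₀.2 with hy2
  -- 1-D functions along the line
  set n : ℝ → ℝ := fun s => 2*(y1+s*d1)*a + 2*(y2+s*d2)*b + ((y1+s*d1)^2+(y2+s*d2)^2-1)*c with hn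
  set dd : ℝ → ℝ := fun s => 1+(y1+s*d1)^2+(y2+s*d2)^2 with hdd
  set np : ℝ → ℝ := fun s => 2*d1*a + 2*d2*b + (2*(y1+s*d1)*d1+2*(y2+s*d2)*d2)*c with hnp
  set dp : ℝ → ℝ := fun s => 2*(y1+s*d1)*d1+2*(y2+s*d2)*d2 with hdp
  set h : ℝ → ℝ := fun s => n s / dd s with hh
  set H : ℝ → ℝ := fun s => (np s * dd s - n s * dp s)/(dd s)^2 with hH
  have hline1 : ∀ s : ℝ, HasDerivAt (fun s : ℝ => y1 + s*d1) d1 s := by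
    intro s; simpa using ((hasDerivAt_id s).mul_const d1).const_add y1
  have hline2 : ∀ s : ℝ, HasDerivAt (fun s : ℝ => y2 + s*d2) d2 s := by
    intro s; simpa using ((hasDerivAt_id s).mul_const d2).const_add y2
  have hnd : ∀ s : ℝ, HasDerivAt n (np s) s := by
    intro s
    have h1 := ((hline1 s).const_mul 2).mul_const a
    have h2 := ((hline2 s).const_mul 2).mul_const b
    have h3 := ((((hline1 s).pow 2).add ((hline2 s).pow 2)).sub_const 1).mul_const c
    have h4 := (h1.add h2).add h3
    refine h4.congr_deriv ?_
    simp only [hnp]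
    push_cast
    ring
  have hdpd : ∀ s : ℝ, HasDerivAt dd (dp s) s := by
    intro s
    have h3 := (((hline1 s).pow 2).const_add 1).add ((hline2 s).pow 2)
    refine h3.congr_deriv ?_
    simp only [hdp]
    push_cast
    ring
  have hddne : ∀ s : ℝ, dd s ≠ 0 := by
    intro s; simp only [hdd]; positivity
  have hhd : ∀ s : ℝ, HasDerivAt h (H s) s := by
    intro s
    exact (hnd s).div (hdpd s) (hddne s)
  have hnpd : ∀ s : ℝ, HasDerivAt np (2*(d1^2+d2^2)*c) s := by
    intro s
    have h3 := ((((hline1 s).const_mul 2).mul_const d1).add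
      (((hline2 s).const_mul 2).mul_const d2)).mul_const c
    have := (h3.const_add (2*d1*a + 2*d2*b))
    refine this.congr_deriv ?_
    ring
  have hdpd2 : ∀ s : ℝ, HasDerivAt dp (2*(d1^2+d2^2)) s := by
    intro s
    have h3 := (((hline1 s).const_mul 2).mul_const d1).add
      (((hline2 s).const_mul 2).mul_const d2)
    refine h3.congr_deriv ?_
    ring
  -- derivative of H at 0
  have hPd : HasDerivAt (fun s => np s * dd s - n s * dp s)
      ((2*(d1^2+d2^2)*c) * dd 0 + np 0 * dp 0 - (np 0 * dp 0 + n 0 * (2*(d1^2+d2^2)))) 0 :=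
    ((hnpd 0).mul (hdpd 0)).sub ((hnd 0).mul (hdpd2 0))
  have hQd : HasDerivAt (fun s => (dd s)^2) (2 * dd 0 * dp 0) 0 := by
    have h5 := (hdpd 0).pow 2
    refine h5.congr_deriv ?_
    push_cast
    ring
  have hHd : HasDerivAt H
      ((((2*(d1^2+d2^2)*c) * dd 0 + np 0 * dp 0 - (np 0 * dp 0 + n 0 * (2*(d1^2+d2^2)))) * ((dd 0)^2)
        - (np 0 * dd 0 - n 0 * dp 0) * (2 * dd 0 * dp 0)) / ((dd 0)^2)^2) 0 := by
    exact hPd.div hQd (by positivity)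
  -- W = v ∘ h
  have hWeq : (fun s : ℝ => w (y₀ + s • ((d1,d2) : ℝ × ℝ))) = fun s => v (h s) := by
    funext s
    rw [hvL]
    congr 1
    try simp only [Lfun, hh, hn, hdd, Prod.fst_add, Prod.snd_add, Prod.smul_fst, Prod.smul_snd,
      smul_eq_mul, hy1, hy2]
    try ring_nf
  -- value h 0 = t₀
  have hh0 : h 0 = t₀ := by
    rw [← hL0]
    simp only [hh, hn, hdd, Lfun, hy1, hy2]
    norm_num
  -- eventually h s ∈ Ioo
  have hev : ∀ᶠ s : ℝ in nhds 0, h s ∈ Set.Ioo (-1:ℝ) 1 := by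
    have hc : ContinuousAt h 0 := (hhd 0).continuousAt
    have : Set.Ioo (-1:ℝ) 1 ∈ nhds (h 0) := by
      rw [hh0]; exact Ioo_mem_nhds ht₀.1 ht₀.2
    exact hc.eventually_mem this
  -- inner derivative
  have hWd : ∀ᶠ s : ℝ in nhds 0, HasDerivAt (fun s => v (h s)) (V1 (h s) * H s) s := by
    filter_upwards [hev] with s hs
    exact (hv1 (h s) hs).comp s (hhd s)
  have hderiv_eq : (fun s => deriv (fun r : ℝ => w (y₀ + r • ((d1,d2) : ℝ × ℝ))) s)
      =ᶠ[nhds 0] (fun s => V1 (h s) * H s) := by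
    filter_upwards [hWd] with s hs
    rw [hWeq]
    exact hs.deriv
  -- outer derivative
  have hV2' : HasDerivAt V1 (V2 t₀) (h 0) := by rw [hh0]; exact hV2
  have hV1h : HasDerivAt (fun s => V1 (h s)) (V2 t₀ * H 0) 0 := hV2'.comp 0 (hhd 0)
  have houter : HasDerivAt (fun s => V1 (h s) * H s)
      (V2 t₀ * H 0 * H 0 + V1 t₀ *
        ((((2*(d1^2+d2^2)*c) * dd 0 + np 0 * dp 0 - (np 0 * dp 0 + n 0 * (2*(d1^2+d2^2)))) * ((dd 0)^2)
        - (np 0 * dd 0 - n 0 * dp 0) * (2 * dd 0 * dp 0)) / ((dd 0)^2)^2)) 0 := by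
    have := hV1h.mul hHd
    have hv10 : V1 (h 0) = V1 t₀ := by rw [hh0]
    rw [hv10] at this
    exact this
  rw [lap_line hw y₀ (d1,d2)]
  have hde : deriv (fun s : ℝ => deriv (fun r : ℝ => w (y₀ + r • ((d1,d2) : ℝ × ℝ))) s) 0
      = deriv (fun s => V1 (h s) * H s) 0 := hderiv_eq.deriv_eq
  rw [hde, houter.deriv]
  have hn0 : n 0 = 2*y1*a + 2*y2*b + (y1^2+y2^2-1)*c := by simp only [hn]; ring_nf
  have hdd0 : dd 0 = 1+y1^2+y2^2 := by simp only [hdd]; ring_nf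
  have hnp0 : np 0 = 2*d1*a + 2*d2*b + (2*y1*d1+2*y2*d2)*c := by simp only [hnp]; ring_nf
  have hdp0 : dp 0 = 2*y1*d1+2*y2*d2 := by simp only [hdp]; ring_nf
  have hH0 : H 0 = ((2*d1*a + 2*d2*b + (2*y1*d1+2*y2*d2)*c) * (1+y1^2+y2^2)
      - (2*y1*a + 2*y2*b + (y1^2+y2^2-1)*c) * (2*y1*d1+2*y2*d2)) / (1+y1^2+y2^2)^2 := by
    simp only [hH, hn0, hdd0, hnp0, hdp0]
  rw [hH0, hn0, hdd0, hnp0, hdp0]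
  ring






lemma chart_ode (a b c : ℝ) (he : a^2+b^2+c^2 = 1) (w : ℝ × ℝ → ℝ) (hw : ContDiff ℝ 2 w)
    (v V1 V2 : ℝ → ℝ) (t₀ : ℝ) (ht₀ : t₀ ∈ Set.Ioo (-1:ℝ) 1)
    (hv1 : ∀ t ∈ Set.Ioo (-1:ℝ) 1, HasDerivAt v (V1 t) t)
    (hV2 : HasDerivAt V1 (V2 t₀) t₀)
    (hvL : ∀ y, w y = v (Lfun a b c y))
    (hpde : ∀ y : ℝ × ℝ, lap w y = 4 * 6 * (1 - Real.exp (w y)) / (1 + y.1^2 + y.2^2)^2)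
    (y₀ : ℝ × ℝ) (hL0 : Lfun a b c y₀ = t₀) :
    (1 - t₀^2) * V2 t₀ - 2*t₀*V1 t₀ = 6*(1 - Real.exp (v t₀)) := by
  have h1 := dir_second_deriv a b c w hw v V1 V2 t₀ ht₀ hv1 hV2 hvL y₀ hL0 1 0
  have h2 := dir_second_deriv a b c w hw v V1 V2 t₀ ht₀ hv1 hV2 hvL y₀ hL0 0 1
  have hp := hpde y₀
  rw [lap, h1, h2, hvL y₀, hL0] at hp
  set y1 := y₀.1 with hy1
  set y2 := y₀.2 with hy2
  have hQ : (1+y1^2+y2^2) ≠ 0 := by positivity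
  -- sum-of-squares identity (S1)
  have hS1 : ((( 2*1*a + 2*0*b + (2*y1*1+2*y2*0)*c) * (1+y1^2+y2^2)
          - (2*y1*a + 2*y2*b + (y1^2+y2^2-1)*c) * (2*y1*1+2*y2*0))
          / (1+y1^2+y2^2)^2)^2
        + ((( 2*0*a + 2*1*b + (2*y1*0+2*y2*1)*c) * (1+y1^2+y2^2)
          - (2*y1*a + 2*y2*b + (y1^2+y2^2-1)*c) * (2*y1*0+2*y2*1))
          / (1+y1^2+y2^2)^2)^2
        = 4*((a^2+b^2+c^2) - t₀^2)/(1+y1^2+y2^2)^2 := by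
    rw [← hL0]
    simp only [Lfun, ← hy1, ← hy2]
    field_simp
    ring
  -- Laplacian identity (S2)
  have hS2 : ((((2*(1^2+0^2)*c) * (1+y1^2+y2^2)
            + (2*1*a + 2*0*b + (2*y1*1+2*y2*0)*c) * (2*y1*1+2*y2*0)
            - ((2*1*a + 2*0*b + (2*y1*1+2*y2*0)*c) * (2*y1*1+2*y2*0)
              + (2*y1*a + 2*y2*b + (y1^2+y2^2-1)*c) * (2*(1^2+0^2)))) * ((1+y1^2+y2^2)^2)
          - ((2*1*a + 2*0*b + (2*y1*1+2*y2*0)*c) * (1+y1^2+y2^2)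
            - (2*y1*a + 2*y2*b + (y1^2+y2^2-1)*c) * (2*y1*1+2*y2*0))
            * (2*(1+y1^2+y2^2)*(2*y1*1+2*y2*0)))
          / ((1+y1^2+y2^2)^2)^2)
        + ((((2*(0^2+1^2)*c) * (1+y1^2+y2^2)
            + (2*0*a + 2*1*b + (2*y1*0+2*y2*1)*c) * (2*y1*0+2*y2*1)
            - ((2*0*a + 2*1*b + (2*y1*0+2*y2*1)*c) * (2*y1*0+2*y2*1)
              + (2*y1*a + 2*y2*b + (y1^2+y2^2-1)*c) * (2*(0^2+1^2)))) * ((1+y1^2+y2^2)^2)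
          - ((2*0*a + 2*1*b + (2*y1*0+2*y2*1)*c) * (1+y1^2+y2^2)
            - (2*y1*a + 2*y2*b + (y1^2+y2^2-1)*c) * (2*y1*0+2*y2*1))
            * (2*(1+y1^2+y2^2)*(2*y1*0+2*y2*1)))
          / ((1+y1^2+y2^2)^2)^2)
        = -8*t₀/(1+y1^2+y2^2)^2 := by
    rw [← hL0]
    simp only [Lfun, ← hy1, ← hy2]
    field_simp
    ring
  rw [he] at hS1
  -- combine
  have hp2 : V2 t₀ * (4*(1 - t₀^2)/(1+y1^2+y2^2)^2) + V1 t₀ * (-8*t₀/(1+y1^2+y2^2)^2)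
      = 4 * 6 * (1 - Real.exp (v t₀)) / (1+y1^2+y2^2)^2 := by
    rw [← hS1, ← hS2]
    linear_combination hp
  field_simp at hp2
  linarith

/-- An axially symmetric solution of `Δu = 6(1 - e^u)` on `S²`
vanishes identically. -/
theorem axisym_solution_lambda_six_is_zero (u : (Fin 3 → ℝ) → ℝ)
    (hu : IsMFSolution 6 u) (hsym : AxiallySymmetric u) :
    ∀ x ∈ sphere3, u x = 0 := by
  obtain ⟨hcont, hw2, -, hpdeN, -⟩ := hu
  obtain ⟨e, he, hs⟩ := hsym
  obtain ⟨a', b', c', he', horth⟩ := exists_orth (e 0) (e 1) (e 2) he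
  set a := e 0 with ha
  set b := e 1 with hb
  set c := e 2 with hc
  set p : ℝ → Fin 3 → ℝ := fun t =>
    ![t*a + Real.sqrt (1-t^2)*a', t*b + Real.sqrt (1-t^2)*b', t*c + Real.sqrt (1-t^2)*c'] with hp
  set v : ℝ → ℝ := fun t => u (p t) with hv
  have hsph : ∀ t:ℝ, -1 ≤ t → t ≤ 1 → p t ∈ sphere3 := by
    intro t h1 h2
    have hs2 : Real.sqrt (1-t^2)^2 = 1-t^2 := Real.sq_sqrt (by nlinarith)
    show (t*a + Real.sqrt (1-t^2)*a')^2 + (t*b + Real.sqrt (1-t^2)*b')^2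
      + (t*c + Real.sqrt (1-t^2)*c')^2 = 1
    linear_combination t^2*he + Real.sqrt (1-t^2)^2*he' + 2*t*Real.sqrt (1-t^2)*horth + hs2
  have hphi : ∀ t:ℝ, -1 ≤ t → t ≤ 1 → p t 0 * a + p t 1 * b + p t 2 * c = t := by
    intro t h1 h2
    show (t*a + Real.sqrt (1-t^2)*a')*a + (t*b + Real.sqrt (1-t^2)*b')*b
      + (t*c + Real.sqrt (1-t^2)*c')*c = t
    linear_combination t*he + Real.sqrt (1-t^2)*horth
  have hux : ∀ x ∈ sphere3, u x = v (x 0*a + x 1*b + x 2*c) := by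
    intro x hx
    have hx' : x 0^2 + x 1^2 + x 2^2 = 1 := hx
    have hsq : (x 0*a + x 1*b + x 2*c)^2 ≤ 1 := by
      nlinarith [sq_nonneg (x 0*b - x 1*a), sq_nonneg (x 0*c - x 2*a),
        sq_nonneg (x 1*c - x 2*b), he, hx']
    have h1 : -1 ≤ x 0*a + x 1*b + x 2*c := by nlinarith [hsq]
    have h2 : x 0*a + x 1*b + x 2*c ≤ 1 := by nlinarith [hsq]
    exact hs x hx (p _) (hsph _ h1 h2) (hphi _ h1 h2).symm
  have hvL : ∀ y, u (stereoN y) = v (Lfun a b c y) := fun y => by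
    rw [hux (stereoN y) (stereoN_mem y), phi_stereoN]
  have hpcont : Continuous p := by
    have hsqc : Continuous (fun t : ℝ => Real.sqrt (1-t^2)) :=
      (continuous_const.sub (continuous_pow 2)).sqrt
    apply continuous_pi
    intro i
    fin_cases i
    · exact ((continuous_id.mul continuous_const).add (hsqc.mul continuous_const))
    · exact ((continuous_id.mul continuous_const).add (hsqc.mul continuous_const))
    · exact ((continuous_id.mul continuous_const).add (hsqc.mul continuous_const))
  have hvcont : ContinuousOn v (Set.Icc (-1:ℝ) 1) := by
    apply ContinuousOn.comp hcont hpcont.continuousOn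
    intro t ht
    exact hsph t ht.1 ht.2
  obtain ⟨M, hM⟩ := isCompact_Icc.exists_bound_of_continuousOn hvcont
  have hbdv : ∀ t ∈ Set.Ioo (-1:ℝ) 1, |v t| ≤ M := fun t ht => by
    have := hM t (Set.Ioo_subset_Icc_self ht)
    rwa [Real.norm_eq_abs] at this
  have hreg : ∀ t₀ ∈ Set.Ioo (-1:ℝ) 1,
      ContDiffAt ℝ 2 v t₀ ∧ ∃ y₀ : ℝ × ℝ, Lfun a b c y₀ = t₀ := by
    intro t₀ ht₀
    by_cases hc1 : t₀*c + Real.sqrt (1-t₀^2)*c' ≠ 1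
    · obtain ⟨h1, h2⟩ := v_contDiffAt a b c a' b' c' he he' horth u v hvL hw2 t₀ ht₀ hc1
      exact ⟨h1, ⟨_, h2⟩⟩
    · push_neg at hc1
      have hcle : c^2 ≤ 1 := by nlinarith [sq_nonneg a, sq_nonneg b]
      have ht2 : t₀^2 < 1 := by nlinarith [ht₀.1, ht₀.2]
      have hc2 : t₀*c + Real.sqrt (1-t₀^2)*(-c') ≠ 1 := by
        intro hh
        have h3 : t₀*c = 1 := by linarith
        have h4 : (t₀*c)^2 = 1 := by rw [h3]; norm_num
        nlinarith [h4, mul_le_mul_of_nonneg_left hcle (sq_nonneg t₀), ht2]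
      have he'2 : (-a')^2+(-b')^2+(-c')^2 = 1 := by linear_combination he'
      have horth2 : a*(-a')+b*(-b')+c*(-c') = 0 := by linear_combination -horth
      obtain ⟨h1, h2⟩ := v_contDiffAt a b c (-a') (-b') (-c') he he'2 horth2 u v hvL hw2 t₀ ht₀ hc2
      exact ⟨h1, ⟨_, h2⟩⟩
  set V1 := deriv v with hV1def
  set V2 := deriv V1 with hV2def
  have hv1 : ∀ t ∈ Set.Ioo (-1:ℝ) 1, HasDerivAt v (V1 t) t := fun t ht =>
    ((hreg t ht).1.differentiableAt (by norm_num)).hasDerivAt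
  have hV1d : ∀ t ∈ Set.Ioo (-1:ℝ) 1, HasDerivAt V1 (V2 t) t := by
    intro t ht
    obtain ⟨hC, -⟩ := hreg t ht
    obtain ⟨s, hsmem, hCs⟩ := hC.contDiffOn le_rfl (by simp)
    obtain ⟨o, ho_sub, ho_open, ho_mem⟩ := mem_nhds_iff.mp hsmem
    have hderiv : ContDiffOn ℝ 1 (deriv v) o :=
      (hCs.mono ho_sub).deriv_of_isOpen ho_open (by norm_num)
    have hdiff : DifferentiableAt ℝ V1 t :=
      (hderiv.differentiableOn one_ne_zero).differentiableAt (ho_open.mem_nhds ho_mem)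
    exact hdiff.hasDerivAt
  have hode : ∀ t ∈ Set.Ioo (-1:ℝ) 1,
      (1 - t^2) * V2 t - 2*t*V1 t = 6*(1 - Real.exp (v t)) := by
    intro t ht
    obtain ⟨-, y₀, hy₀⟩ := hreg t ht
    exact chart_ode a b c he _ hw2 v V1 V2 t ht hv1 (hV1d t ht) hvL hpdeN y₀ hy₀
  have hzero := ode_zero v V1 V2 M hv1 hV1d hode hbdv
  -- endpoint values by continuity
  have hv1e : v 1 = 0 := by
    haveI : (nhdsWithin (1:ℝ) (Set.Ioo (-1:ℝ) 1)).NeBot := by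
      apply mem_closure_iff_nhdsWithin_neBot.mp
      rw [closure_Ioo (by norm_num : (-1:ℝ) ≠ 1)]
      exact ⟨by norm_num, le_refl 1⟩
    have h1 : Filter.Tendsto v (nhdsWithin 1 (Set.Ioo (-1:ℝ) 1)) (nhds (v 1)) :=
      (hvcont 1 (by constructor <;> norm_num)).mono Set.Ioo_subset_Icc_self
    have h2 : Filter.Tendsto v (nhdsWithin 1 (Set.Ioo (-1:ℝ) 1)) (nhds 0) := by
      apply Filter.Tendsto.congr' _ tendsto_const_nhds
      filter_upwards [self_mem_nhdsWithin] with t ht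
      exact (hzero t ht).symm
    exact tendsto_nhds_unique h1 h2
  have hvme : v (-1) = 0 := by
    haveI : (nhdsWithin (-1:ℝ) (Set.Ioo (-1:ℝ) 1)).NeBot := by
      apply mem_closure_iff_nhdsWithin_neBot.mp
      rw [closure_Ioo (by norm_num : (-1:ℝ) ≠ 1)]
      exact ⟨le_refl (-1), by norm_num⟩
    have h1 : Filter.Tendsto v (nhdsWithin (-1) (Set.Ioo (-1:ℝ) 1)) (nhds (v (-1))) :=
      (hvcont (-1) (by constructor <;> norm_num)).mono Set.Ioo_subset_Icc_self
    have h2 : Filter.Tendsto v (nhdsWithin (-1) (Set.Ioo (-1:ℝ) 1)) (nhds 0) := by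
      apply Filter.Tendsto.congr' _ tendsto_const_nhds
      filter_upwards [self_mem_nhdsWithin] with t ht
      exact (hzero t ht).symm
    exact tendsto_nhds_unique h1 h2
  -- conclusion
  intro x hx
  rw [hux x hx]
  have hx' : x 0^2 + x 1^2 + x 2^2 = 1 := hx
  have hsq : (x 0*a + x 1*b + x 2*c)^2 ≤ 1 := by
    nlinarith [sq_nonneg (x 0*b - x 1*a), sq_nonneg (x 0*c - x 2*a),
      sq_nonneg (x 1*c - x 2*b), he, hx']
  have h1 : -1 ≤ x 0*a + x 1*b + x 2*c := by nlinarith [hsq]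
  have h2 : x 0*a + x 1*b + x 2*c ≤ 1 := by nlinarith [hsq]
  rcases eq_or_lt_of_le h1 with h1e | h1l
  · rw [← h1e]; exact hvme
  rcases eq_or_lt_of_le h2 with h2e | h2l
  · rw [h2e]; exact hv1e
  exact hzero _ ⟨h1l, h2l⟩
end
end

section
/- Let g : [−1,1] → ℝ be twice continuously differentiable and satisfy ((1−t²) g'(t))' = 6(1−e^{g(t)}) for all t ∈ [−1,1]. Then g ≡ 0. -/
open Real MeasureTheory

noncomputable section

/-- The axially symmetric mean field equation at `λ = 6`:
if `((1 - t²) g')' = 6(1 - e^g)` on `[-1, 1]`, then `g ≡ 0`. -/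
theorem axisym_ode_lambda_six_is_zero (g : ℝ → ℝ)
    (hg : ContDiffOn ℝ 2 g (Set.Icc (-1 : ℝ) 1))
    (hode : ∀ t ∈ Set.Icc (-1 : ℝ) 1,
      derivWithin (fun s => (1 - s ^ 2) * derivWithin g (Set.Icc (-1 : ℝ) 1) s)
          (Set.Icc (-1 : ℝ) 1) t = 6 * (1 - Real.exp (g t))) :
    ∀ t ∈ Set.Icc (-1 : ℝ) 1, g t = 0 := by
  have h11 : (-1 : ℝ) < 1 := by norm_num
  have hI : UniqueDiffOn ℝ (Set.Icc (-1 : ℝ) 1) := uniqueDiffOn_Icc h11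
  set g' : ℝ → ℝ := derivWithin g (Set.Icc (-1 : ℝ) 1) with hg'def
  set F : ℝ → ℝ := fun s => (1 - s ^ 2) * g' s with hFdef
  have hg'cd : ContDiffOn ℝ 1 g' (Set.Icc (-1 : ℝ) 1) := hg.derivWithin hI (by norm_num)
  have hg'cont : ContinuousOn g' (Set.Icc (-1 : ℝ) 1) := hg'cd.continuousOn
  have hgcont : ContinuousOn g (Set.Icc (-1 : ℝ) 1) := hg.continuousOn
  have hgdiff : DifferentiableOn ℝ g (Set.Icc (-1 : ℝ) 1) := hg.differentiableOn (by norm_num)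
  have hFcont : ContinuousOn F (Set.Icc (-1 : ℝ) 1) := by
    apply ContinuousOn.mul _ hg'cont
    fun_prop
  have hFdiff : DifferentiableOn ℝ F (Set.Icc (-1 : ℝ) 1) := by
    apply DifferentiableOn.mul _ (hg'cd.differentiableOn one_ne_zero)
    fun_prop
  have hmem : ∀ x ∈ Set.Ioo (-1 : ℝ) 1, Set.Icc (-1 : ℝ) 1 ∈ nhds x :=
    fun x hx => Icc_mem_nhds hx.1 hx.2
  have hgd : ∀ x ∈ Set.Ioo (-1 : ℝ) 1, HasDerivAt g (g' x) x := by
    intro x hx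
    have h1 : DifferentiableAt ℝ g x :=
      (hgdiff x (Set.Ioo_subset_Icc_self hx)).differentiableAt (hmem x hx)
    have h2 : g' x = deriv g x := by rw [hg'def, derivWithin_of_mem_nhds (hmem x hx)]
    rw [h2]; exact h1.hasDerivAt
  have hFd : ∀ x ∈ Set.Ioo (-1 : ℝ) 1, HasDerivAt F (6 * (1 - Real.exp (g x))) x := by
    intro x hx
    have h1 : DifferentiableAt ℝ F x :=
      (hFdiff x (Set.Ioo_subset_Icc_self hx)).differentiableAt (hmem x hx)
    have h2 : deriv F x = 6 * (1 - Real.exp (g x)) := by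
      rw [← derivWithin_of_mem_nhds (hmem x hx)]
      exact hode x (Set.Ioo_subset_Icc_self hx)
    rw [← h2]; exact h1.hasDerivAt
  -- the master function: M' = F^2/2 along the flow
  set M : ℝ → ℝ := fun s =>
    s * (F s ^ 2 / 2 + 6 * (1 - s ^ 2) * (Real.exp (g s) - g s - 1))
      - (3 * s ^ 2 - 1) * F s + (6 * s - 6 * s ^ 3) * g s with hMdef
  have hMd : ∀ x ∈ Set.Ioo (-1 : ℝ) 1, HasDerivAt M (F x ^ 2 / 2) x := by
    intro x hx
    have hgx := hgd x hx
    have hFx := hFd x hx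
    have hid : HasDerivAt (fun y : ℝ => y) 1 x := hasDerivAt_id' x
    have hone : HasDerivAt (fun s : ℝ => 1 - s ^ 2) (-((2 : ℕ) * x ^ 1)) x :=
      (hasDerivAt_pow 2 x).const_sub 1
    have hPhi : HasDerivAt (fun s => Real.exp (g s) - g s - 1)
        (Real.exp (g x) * g' x - g' x) x := (hgx.exp.sub hgx).sub_const 1
    have hF2 := (hFx.pow 2).div_const 2
    have hE := hF2.add ((hone.const_mul (6 : ℝ)).mul hPhi)
    have hA := hid.mul hE
    have hB := (((hasDerivAt_pow 2 x).const_mul (3 : ℝ)).sub_const 1).mul hFx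
    have hC := ((hid.const_mul (6 : ℝ)).sub ((hasDerivAt_pow 3 x).const_mul (6 : ℝ))).mul hgx
    have htot := (hA.sub hB).add hC
    rw [hMdef]
    refine (htot.congr_of_eventuallyEq (Filter.Eventually.of_forall fun s => ?_)).congr_deriv ?_
    · simp only [Pi.mul_apply, Pi.add_apply, Pi.sub_apply, Pi.pow_apply]
    · simp only [hFdef, Pi.mul_apply, Pi.add_apply, Pi.sub_apply, Pi.pow_apply]
      push_cast
      ring
  have hMcont : ContinuousOn M (Set.Icc (-1 : ℝ) 1) := by
    rw [hMdef]
    have hexp : ContinuousOn (fun s => Real.exp (g s)) (Set.Icc (-1 : ℝ) 1) :=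
      Real.continuous_exp.comp_continuousOn hgcont
    fun_prop
  have hM1 : M 1 = 0 := by
    rw [hMdef]
    simp only [hFdef]
    norm_num
  have hM2 : M (-1) = 0 := by
    rw [hMdef]
    simp only [hFdef]
    norm_num
  have hint : IntervalIntegrable (fun y => F y ^ 2 / 2) volume (-1 : ℝ) 1 := by
    apply ContinuousOn.intervalIntegrable
    rw [Set.uIcc_of_le (le_of_lt h11)]
    exact (hFcont.pow 2).div_const 2
  have hFTC : ∫ y in (-1 : ℝ)..1, F y ^ 2 / 2 = M 1 - M (-1) :=
    intervalIntegral.integral_eq_sub_of_hasDerivAt_of_le (le_of_lt h11) hMcont hMd hint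
  have hzero : ∫ y in (-1 : ℝ)..1, F y ^ 2 / 2 = 0 := by
    rw [hFTC, hM1, hM2]; ring
  -- hence F vanishes identically on [-1, 1]
  have hF0 : Set.EqOn F (fun _ => (0 : ℝ)) (Set.Icc (-1 : ℝ) 1) := by
    intro x hx
    rcases eq_or_lt_of_le hx.1 with h1 | h1
    · show F x = 0
      rw [hFdef, ← h1]; norm_num
    rcases eq_or_lt_of_le hx.2 with h2 | h2
    · show F x = 0
      rw [hFdef, h2]; norm_num
    by_contra hne
    have hne' : F x ≠ 0 := hne
    have hc : (0 : ℝ) < F x ^ 2 / 4 := by positivity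
    have hcx : ContinuousAt (fun y => F y ^ 2 / 2) x :=
      (((hFcont x hx).continuousAt (hmem x ⟨h1, h2⟩)).pow 2).div_const 2
    have hev : (fun y => F y ^ 2 / 2) ⁻¹' Set.Ioi (F x ^ 2 / 4) ∈ nhds x := by
      apply hcx
      exact Ioi_mem_nhds (by nlinarith [sq_nonneg (F x)])
    obtain ⟨ε, hεpos, hball⟩ := Metric.mem_nhds_iff.mp hev
    set δ : ℝ := min (ε / 2) (min ((x + 1) / 2) ((1 - x) / 2)) with hδdef
    have hδpos : 0 < δ := by
      apply lt_min (by linarith)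
      apply lt_min <;> linarith
    have hδε : δ < ε := lt_of_le_of_lt (min_le_left _ _) (by linarith)
    have hδa : δ ≤ (x + 1) / 2 := le_trans (min_le_right _ _) (min_le_left _ _)
    have hδb : δ ≤ (1 - x) / 2 := le_trans (min_le_right _ _) (min_le_right _ _)
    have hu1 : (-1 : ℝ) ≤ x - δ := by linarith
    have hv1 : x + δ ≤ 1 := by linarith
    have huv : x - δ ≤ x + δ := by linarith
    have hsub : ∀ y ∈ Set.Icc (x - δ) (x + δ), F x ^ 2 / 4 ≤ F y ^ 2 / 2 := by
      intro y hy
      have : y ∈ Metric.ball x ε := by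
        rw [Metric.mem_ball, Real.dist_eq, abs_sub_lt_iff]
        exact ⟨by linarith [hy.2], by linarith [hy.1]⟩
      exact le_of_lt (hball this)
    have hmono : ∀ a b : ℝ, (-1 : ℝ) ≤ a → b ≤ 1 → a ≤ b →
        IntervalIntegrable (fun y => F y ^ 2 / 2) volume a b := by
      intro a b ha hb hab
      apply hint.mono_set
      rw [Set.uIcc_of_le hab, Set.uIcc_of_le (le_of_lt h11)]
      exact Set.Icc_subset_Icc ha hb
    have hi1 : IntervalIntegrable (fun y => F y ^ 2 / 2) volume (-1 : ℝ) (x - δ) :=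
      hmono _ _ (le_refl _) (by linarith) hu1
    have hi2 : IntervalIntegrable (fun y => F y ^ 2 / 2) volume (x - δ) (x + δ) :=
      hmono _ _ hu1 hv1 huv
    have hi3 : IntervalIntegrable (fun y => F y ^ 2 / 2) volume (x + δ) 1 :=
      hmono _ _ (by linarith) (le_refl _) hv1
    have hsplit2 : (∫ y in (x - δ)..(x + δ), F y ^ 2 / 2) + ∫ y in (x + δ)..1, F y ^ 2 / 2 =
        ∫ y in (x - δ)..1, F y ^ 2 / 2 :=
      intervalIntegral.integral_add_adjacent_intervals hi2 hi3
    have hsplit1 : (∫ y in (-1 : ℝ)..(x - δ), F y ^ 2 / 2) + ∫ y in (x - δ)..1, F y ^ 2 / 2 =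
        ∫ y in (-1 : ℝ)..1, F y ^ 2 / 2 :=
      intervalIntegral.integral_add_adjacent_intervals hi1 (hmono _ _ hu1 (le_refl _) (by linarith))
    have hn1 : (0 : ℝ) ≤ ∫ y in (-1 : ℝ)..(x - δ), F y ^ 2 / 2 :=
      intervalIntegral.integral_nonneg hu1 (fun y _ => by positivity)
    have hn3 : (0 : ℝ) ≤ ∫ y in (x + δ)..1, F y ^ 2 / 2 :=
      intervalIntegral.integral_nonneg hv1 (fun y _ => by positivity)
    have hmid : ((x + δ) - (x - δ)) * (F x ^ 2 / 4) ≤ ∫ y in (x - δ)..(x + δ), F y ^ 2 / 2 := by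
      have hconst : ∫ _ in (x - δ)..(x + δ), F x ^ 2 / 4 = ((x + δ) - (x - δ)) * (F x ^ 2 / 4) := by
        rw [intervalIntegral.integral_const]
        simp [smul_eq_mul]
      rw [← hconst]
      exact intervalIntegral.integral_mono_on huv intervalIntegrable_const hi2 hsub
    have hpos : (0 : ℝ) < ((x + δ) - (x - δ)) * (F x ^ 2 / 4) := by
      have : (x + δ) - (x - δ) = 2 * δ := by ring
      rw [this]; positivity
    linarith [hzero, hsplit1, hsplit2, hn1, hn3, hmid, hpos]
  -- conclude
  intro t ht
  have hd : derivWithin F (Set.Icc (-1 : ℝ) 1) t = 0 := by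
    rw [derivWithin_congr hF0 (hF0 ht)]
    exact (hasDerivWithinAt_const t _ (0 : ℝ)).derivWithin (hI t ht)
  have h6 := hode t ht
  rw [hd] at h6
  have hexp1 : Real.exp (g t) = Real.exp 0 := by
    rw [Real.exp_zero]; linarith [h6]
  exact Real.exp_injective hexp1
end
end

section
/- Let λ ∈ ℝ and let ū : ℝ² → ℝ be three times continuously differentiable and satisfy Δū(y) = 4λ(1−e^{ū(y)})/(1+|y|²)² for all y ∈ ℝ² (the stereographic chart form of the mean field equation Δu = λ(1−e^u) on S²). Define φ(y) = y₁ ∂₂ū(y) − y₂ ∂₁ū(y) (the derivative of ū along the rotation vector field of ℝ², corresponding to the Killing field X₃ = x₁∂₂ − x₂∂₁ on S²). Then Δφ(y) + 4λ e^{ū(y)} φ(y) / (1+|y|²)² = 0 for all y ∈ ℝ². -/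
open Real MeasureTheory

noncomputable section

lemma lap_eq (w : ℝ × ℝ → ℝ) (y : ℝ × ℝ) :
    lap w y = fderiv ℝ (fderiv ℝ w) y (1, 0) (1, 0) + fderiv ℝ (fderiv ℝ w) y (0, 1) (0, 1) := by
  unfold lap
  rw [iteratedFDeriv_two_apply, iteratedFDeriv_two_apply]
  simp

lemma fderiv_clm_apply_const {E F : Type*} [NormedAddCommGroup E] [NormedSpace ℝ E]
    [NormedAddCommGroup F] [NormedSpace ℝ F] {c : E → E →L[ℝ] F} {z : E}
    (hc : DifferentiableAt ℝ c z) (b a : E) :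
    fderiv ℝ (fun w => c w b) z a = fderiv ℝ c z a b := by
  rw [fderiv_clm_apply hc (differentiableAt_const b)]
  simp


set_option maxHeartbeats 2000000 in
/-- linearization along the rotation field: if `ū` is C³ and solves the chart
form of the mean field equation, then `φ = y₁∂₂ū − y₂∂₁ū` solves
`Δφ + 4λ e^{ū} φ/(1+|y|²)² = 0`. -/
theorem rotation_derivative_solves_linearized (lam : ℝ) (ub : ℝ × ℝ → ℝ)
    (hub : ContDiff ℝ 3 ub)
    (heq : ∀ y : ℝ × ℝ,
      lap ub y = 4 * lam * (1 - Real.exp (ub y)) / (1 + y.1 ^ 2 + y.2 ^ 2) ^ 2) :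
    ∀ y : ℝ × ℝ,
      lap (fun z => z.1 * fderiv ℝ ub z (0, 1) - z.2 * fderiv ℝ ub z (1, 0)) y
        + 4 * lam * Real.exp (ub y)
            * (y.1 * fderiv ℝ ub y (0, 1) - y.2 * fderiv ℝ ub y (1, 0))
            / (1 + y.1 ^ 2 + y.2 ^ 2) ^ 2 = 0 := by
  intro y
  have hubd : Differentiable ℝ ub := hub.differentiable (by norm_num)
  set g := fderiv ℝ ub with hgdef
  have hgC : ContDiff ℝ 2 g := hub.fderiv_right (by norm_num)
  have hgd : Differentiable ℝ g := hgC.differentiable (by norm_num)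
  set G := fderiv ℝ g with hGdef
  have hGC : ContDiff ℝ 1 G := hgC.fderiv_right (by norm_num)
  have hGd : Differentiable ℝ G := hGC.differentiable (by norm_num)
  set H := fderiv ℝ G with hHdef
  have hGsymm : ∀ (z a b : ℝ × ℝ), G z a b = G z b a := fun z a b =>
    second_derivative_symmetric (fun w => (hubd w).hasFDerivAt) (hgd z).hasFDerivAt a b
  have hHsymm : ∀ a b : ℝ × ℝ, H y a b = H y b a := fun a b =>
    second_derivative_symmetric (fun w => (hgd w).hasFDerivAt) (hGd y).hasFDerivAt a b
  have hGapp : ∀ (z b a : ℝ × ℝ), fderiv ℝ (fun w => g w b) z a = G z a b :=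
    fun z b a => fderiv_clm_apply_const (hgd z) b a
  have hH3 : ∀ (b c a : ℝ × ℝ), fderiv ℝ (fun w => G w b c) y a = H y a b c := by
    intro b c a
    have h1 : DifferentiableAt ℝ (fun w => G w b) y :=
      (hGd y).clm_apply (differentiableAt_const b)
    rw [fderiv_clm_apply_const h1 c a, fderiv_clm_apply_const (hGd y) b a]
  have hHsymm23 : ∀ a b c : ℝ × ℝ, H y a b c = H y a c b := by
    intro a b c
    have e : (fun w => G w b c) = fun w => G w c b := funext fun w => hGsymm w b c
    rw [← hH3 b c a, e, hH3 c b a]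
  -- the rotation derivative φ
  set φ := fun z : ℝ × ℝ => z.1 * g z (0, 1) - z.2 * g z (1, 0) with hφdef
  have hgapp_d : ∀ (b : ℝ × ℝ) (z : ℝ × ℝ), DifferentiableAt ℝ (fun w => g w b) z :=
    fun b z => (hgd z).clm_apply (differentiableAt_const b)
  have hφC : ContDiff ℝ 2 φ := by
    exact (contDiff_fst.mul (hgC.clm_apply contDiff_const)).sub
      (contDiff_snd.mul (hgC.clm_apply contDiff_const))
  have hφC1 : ContDiff ℝ 1 (fderiv ℝ φ) := hφC.fderiv_right (by norm_num)
  have hφ'd : ∀ z, DifferentiableAt ℝ (fderiv ℝ φ) z :=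
    fun z => (hφC1.differentiable (by norm_num)) z
  -- first derivative of φ
  have hφ' : ∀ (z a : ℝ × ℝ), fderiv ℝ φ z a
      = a.1 * g z (0, 1) + z.1 * G z a (0, 1) - (a.2 * g z (1, 0) + z.2 * G z a (1, 0)) := by
    intro z a
    have hA : DifferentiableAt ℝ (fun w : ℝ × ℝ => w.1 * g w (0, 1)) z :=
      differentiableAt_fst.mul (hgapp_d _ z)
    have hB : DifferentiableAt ℝ (fun w : ℝ × ℝ => w.2 * g w (1, 0)) z :=
      differentiableAt_snd.mul (hgapp_d _ z)
    have h1 := fderiv_fun_mul (𝕜 := ℝ) (x := z) differentiableAt_fst (hgapp_d (0, 1) z)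
    have h2 := fderiv_fun_mul (𝕜 := ℝ) (x := z) differentiableAt_snd (hgapp_d (1, 0) z)
    have hsub := fderiv_fun_sub hA hB
    rw [hφdef]
    rw [hsub, ContinuousLinearMap.sub_apply, h1, h2]
    simp only [ContinuousLinearMap.add_apply, ContinuousLinearMap.smul_apply, smul_eq_mul,
      fderiv_fst, fderiv_snd, ContinuousLinearMap.coe_fst', ContinuousLinearMap.coe_snd']
    rw [hGapp z (0, 1) a, hGapp z (1, 0) a]
    ring
  -- second directional derivatives of φ
  have hGapp_d : ∀ (a b z : ℝ × ℝ), DifferentiableAt ℝ (fun w => G w a b) z :=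
    fun a b z => ((hGd z).clm_apply (differentiableAt_const a)).clm_apply (differentiableAt_const b)
  have hlap2 : ∀ a : ℝ × ℝ, fderiv ℝ (fderiv ℝ φ) y a a
      = a.1 * G y a (0, 1) + (a.1 * G y a (0, 1) + y.1 * H y a a (0, 1))
        - (a.2 * G y a (1, 0) + (a.2 * G y a (1, 0) + y.2 * H y a a (1, 0))) := by
    intro a
    rw [← fderiv_clm_apply_const (hφ'd y) a a]
    have hfun : (fun w => fderiv ℝ φ w a)
        = fun w => a.1 * g w (0, 1) + w.1 * G w a (0, 1)
            - (a.2 * g w (1, 0) + w.2 * G w a (1, 0)) :=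
      funext fun w => hφ' w a
    rw [hfun]
    have d1 : DifferentiableAt ℝ (fun w : ℝ × ℝ => a.1 * g w (0, 1)) y :=
      (hgapp_d _ y).const_mul _
    have d2 : DifferentiableAt ℝ (fun w : ℝ × ℝ => w.1 * G w a (0, 1)) y :=
      differentiableAt_fst.mul (hGapp_d _ _ y)
    have d3 : DifferentiableAt ℝ (fun w : ℝ × ℝ => a.2 * g w (1, 0)) y :=
      (hgapp_d _ y).const_mul _
    have d4 : DifferentiableAt ℝ (fun w : ℝ × ℝ => w.2 * G w a (1, 0)) y :=
      differentiableAt_snd.mul (hGapp_d _ _ y)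
    rw [fderiv_fun_sub (d1.fun_add d2) (d3.fun_add d4), ContinuousLinearMap.sub_apply,
      fderiv_fun_add d1 d2, fderiv_fun_add d3 d4, ContinuousLinearMap.add_apply,
      ContinuousLinearMap.add_apply,
      fderiv_const_mul (hgapp_d _ y) a.1, fderiv_const_mul (hgapp_d _ y) a.2,
      fderiv_fun_mul differentiableAt_fst (hGapp_d _ _ y),
      fderiv_fun_mul differentiableAt_snd (hGapp_d _ _ y)]
    simp only [ContinuousLinearMap.add_apply, ContinuousLinearMap.smul_apply, smul_eq_mul,
      fderiv_fst, fderiv_snd, ContinuousLinearMap.coe_fst', ContinuousLinearMap.coe_snd']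
    rw [hGapp y (0, 1) a, hGapp y (1, 0) a, hH3 a (0, 1) a, hH3 a (1, 0) a]
    ring
  -- the Laplacian of φ in terms of third derivatives
  have s1 : G y (1, 0) (0, 1) = G y (0, 1) (1, 0) := hGsymm y _ _
  have s2 : H y (1, 0) (1, 0) (0, 1) = H y (0, 1) (1, 0) (1, 0) := by
    rw [hHsymm23 (1, 0) (1, 0) (0, 1)]
    exact congrArg (fun L => L (1, 0)) (hHsymm (1, 0) (0, 1))
  have s3 : H y (0, 1) (0, 1) (1, 0) = H y (1, 0) (0, 1) (0, 1) := by
    rw [hHsymm23 (0, 1) (0, 1) (1, 0)]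
    exact congrArg (fun L => L (0, 1)) (hHsymm (0, 1) (1, 0))
  have hlapφ : lap φ y
      = y.1 * (H y (0, 1) (1, 0) (1, 0) + H y (0, 1) (0, 1) (0, 1))
        - y.2 * (H y (1, 0) (1, 0) (1, 0) + H y (1, 0) (0, 1) (0, 1)) := by
    rw [lap_eq, hlap2 (1, 0), hlap2 (0, 1)]
    norm_num
    rw [s1, s2, s3]
    ring
  -- derivative of the Laplacian of ub via the equation
  have hL' : ∀ b : ℝ × ℝ,
      fderiv ℝ (fun z => G z (1, 0) (1, 0) + G z (0, 1) (0, 1)) y b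
        = H y b (1, 0) (1, 0) + H y b (0, 1) (0, 1) := by
    intro b
    rw [fderiv_fun_add (hGapp_d _ _ y) (hGapp_d _ _ y), ContinuousLinearMap.add_apply, hH3, hH3]
  have hLR : (fun z : ℝ × ℝ => G z (1, 0) (1, 0) + G z (0, 1) (0, 1))
      = fun z => 4 * lam * (1 - Real.exp (ub z)) / (1 + z.1 ^ 2 + z.2 ^ 2) ^ 2 :=
    funext fun z => (lap_eq ub z).symm.trans (heq z)
  have hfun2 : (fun z : ℝ × ℝ => 4 * lam * (1 - Real.exp (ub z)) / (1 + z.1 ^ 2 + z.2 ^ 2) ^ 2)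
      = fun z => 4 * lam * (1 - Real.exp (ub z))
          * ((1 + z.1 * z.1 + z.2 * z.2) * (1 + z.1 * z.1 + z.2 * z.2))⁻¹ := by
    funext z
    have h : ((1 : ℝ) + z.1 ^ 2 + z.2 ^ 2) ^ 2
        = (1 + z.1 * z.1 + z.2 * z.2) * (1 + z.1 * z.1 + z.2 * z.2) := by ring
    rw [div_eq_mul_inv, h]
  -- explicit derivative of the right-hand side
  have hrne : (1 + y.1 * y.1 + y.2 * y.2 : ℝ) ≠ 0 := by
    have h : (1 + y.1 * y.1 + y.2 * y.2 : ℝ) = 1 + y.1 ^ 2 + y.2 ^ 2 := by ring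
    rw [h]; positivity
  have hdenne : ((1 + y.1 * y.1 + y.2 * y.2) * (1 + y.1 * y.1 + y.2 * y.2) : ℝ) ≠ 0 :=
    mul_ne_zero hrne hrne
  have hden : HasFDerivAt
      (fun z : ℝ × ℝ => (1 + z.1 * z.1 + z.2 * z.2) * (1 + z.1 * z.1 + z.2 * z.2)) (_ : ℝ × ℝ →L[ℝ] ℝ) y :=
    (((hasFDerivAt_const (1 : ℝ) y).add (hasFDerivAt_fst.mul hasFDerivAt_fst)).add
      (hasFDerivAt_snd.mul hasFDerivAt_snd)).mul
      (((hasFDerivAt_const (1 : ℝ) y).add (hasFDerivAt_fst.mul hasFDerivAt_fst)).add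
        (hasFDerivAt_snd.mul hasFDerivAt_snd))
  have hq : HasFDerivAt
      (fun z : ℝ × ℝ => ((1 + z.1 * z.1 + z.2 * z.2) * (1 + z.1 * z.1 + z.2 * z.2))⁻¹) (_ : ℝ × ℝ →L[ℝ] ℝ) y :=
    (hasDerivAt_inv hdenne).comp_hasFDerivAt y hden
  have hnum : HasFDerivAt (fun z : ℝ × ℝ => 4 * lam * (1 - Real.exp (ub z))) (_ : ℝ × ℝ →L[ℝ] ℝ) y :=
    ((hasFDerivAt_const (1 : ℝ) y).sub ((hubd y).hasFDerivAt.exp)).const_mul (4 * lam)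
  have hRHS : HasFDerivAt
      (fun z : ℝ × ℝ => 4 * lam * (1 - Real.exp (ub z))
        * ((1 + z.1 * z.1 + z.2 * z.2) * (1 + z.1 * z.1 + z.2 * z.2))⁻¹) (_ : ℝ × ℝ →L[ℝ] ℝ) y := hnum.mul hq
  have hD := hRHS.fderiv
  have hK1 : H y (1, 0) (1, 0) (1, 0) + H y (1, 0) (0, 1) (0, 1)
      = fderiv ℝ (fun z : ℝ × ℝ => 4 * lam * (1 - Real.exp (ub z))
          * ((1 + z.1 * z.1 + z.2 * z.2) * (1 + z.1 * z.1 + z.2 * z.2))⁻¹) y (1, 0) := by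
    rw [← hL' (1, 0), hLR, hfun2]
  have hK2 : H y (0, 1) (1, 0) (1, 0) + H y (0, 1) (0, 1) (0, 1)
      = fderiv ℝ (fun z : ℝ × ℝ => 4 * lam * (1 - Real.exp (ub z))
          * ((1 + z.1 * z.1 + z.2 * z.2) * (1 + z.1 * z.1 + z.2 * z.2))⁻¹) y (0, 1) := by
    rw [← hL' (0, 1), hLR, hfun2]
  rw [hD] at hK1 hK2
  simp only [ContinuousLinearMap.add_apply, ContinuousLinearMap.smul_apply,
    ContinuousLinearMap.sub_apply, ContinuousLinearMap.zero_apply, smul_eq_mul,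
    ContinuousLinearMap.coe_fst', ContinuousLinearMap.coe_snd'] at hK1 hK2
  norm_num at hK1 hK2
  rw [hlapφ, hK1, hK2]
  have hx2 : ((1 : ℝ) + y.1 ^ 2 + y.2 ^ 2) ^ 2 ≠ 0 := by positivity
  field_simp
  ring
end
end
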